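/- For every admissible left-infinite sequence s ∈ {0,1}^{-ℕ}: sup π_0(A(s)) = inf{T^n(c) : n ≥ 1, s_{-(n-1)}…s_{-1} = c_1…c_{n-1}, #_1(c_1…c_{n-1}) even} and inf π_0(A(s)) = sup{T^n(c) : n ≥ 1, s_{-(n-1)}…s_{-1} = c_1…c_{n-1}, #_1(c_1…c_{n-1}) odd}. -/

import Mathlib

/-- `T : ℝ → ℝ` is a unimodal map on `[0,1]` with critical point `c`. -/
def IsUnimodal (T : ℝ → ℝ) (c : ℝ) : Prop :=
  ContinuousOn T (Set.Icc 0 1) ∧ Set.MapsTo T (Set.Icc 0 1) (Set.Icc 0 1) ∧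
    T 0 = 0 ∧ 0 < c ∧ c < 1 ∧
    StrictMonoOn T (Set.Icc 0 c) ∧ StrictAntiOn T (Set.Icc c 1)

-- Symbols `0, *, 1` are encoded as `(0 : Fin 3), (1 : Fin 3), (2 : Fin 3)`
-- respectively; this realizes the order `0 < * < 1`.
open Classical in
/-- The raw (unmodified) itinerary of `x`: the `n`-th symbol is `0` if `Tⁿ(x) < c`,
`*` if `Tⁿ(x) = c` and `1` if `Tⁿ(x) > c`. -/
noncomputable def rawItin (T : ℝ → ℝ) (c : ℝ) (x : ℝ) : ℕ → Fin 3 := fun n =>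
  if T^[n] x < c then 0 else if T^[n] x = c then 1 else 2

/-- The number of `1`s among the first `k` symbols of `s`. -/
def onesCount (s : ℕ → Fin 3) (k : ℕ) : ℕ :=
  ((Finset.range k).filter fun i => s i = 2).card

/-- The (strict) parity-lexicographical ordering on `{0,*,1}^ℕ`. -/
def PlexLt (s t : ℕ → Fin 3) : Prop :=
  ∃ k : ℕ, (∀ i < k, s i = t i) ∧ s k ≠ t k ∧
    ((s k < t k ∧ Even (onesCount s k)) ∨ (t k < s k ∧ Odd (onesCount s k)))

/-- The parity-lexicographical ordering `⪯`. -/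
def PlexLe (s t : ℕ → Fin 3) : Prop := PlexLt s t ∨ s = t

open Classical in
/-- The (modified) kneading sequence `ν = c₁c₂… = I(T(c))`: if the critical point is
periodic, so that the raw itinerary of `T(c)` contains `*` (first at index `n-1`, whence it
is `(c₁…c_{n-1}*)^∞`), then `ν` is the parity-lexicographically smaller of
`(c₁…c_{n-1}0)^∞` and `(c₁…c_{n-1}1)^∞`. -/
noncomputable def kneading (T : ℝ → ℝ) (c : ℝ) : ℕ → Fin 3 :=
  if h : ∃ i, rawItin T c (T c) i = 1 then
    let n := Nat.find h + 1
    let w : Fin 3 → ℕ → Fin 3 := fun b j =>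
      if j % n = n - 1 then b else rawItin T c (T c) (j % n)
    if PlexLe (w 0) (w 2) then w 0 else w 2
  else rawItin T c (T c)

open Classical in
/-- The modified itinerary of `x`: it agrees with the raw itinerary up to the first
occurrence of `*` (if any), and after that first `*` it continues with the modified
kneading sequence `ν`. -/
noncomputable def itin (T : ℝ → ℝ) (c : ℝ) (x : ℝ) : ℕ → Fin 3 :=
  if h : ∃ i, T^[i] x = c then
    fun n =>
      if n < Nat.find h then rawItin T c x n
      else if n = Nat.find h then 1
      else kneading T c (n - Nat.find h - 1)
  else rawItin T c x


/-- The inverse limit `X = lim←([0,1], T)`, modelled as sequences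
`x : ℕ → ℝ` where `x n` represents the coordinate `x_{-n}`. -/
def invLimitSet (T : ℝ → ℝ) : Set (ℕ → ℝ) :=
  {x | (∀ n, x n ∈ Set.Icc (0 : ℝ) 1) ∧ ∀ n, T (x (n + 1)) = x n}

/-- Encoding of the two-element alphabet `{0,1}` into `{0,*,1}`:
`false ↦ 0` and `true ↦ 1` (i.e. `(2 : Fin 3)`). -/
def b2f (b : Bool) : Fin 3 := if b then 2 else 0

/-- A left-infinite sequence `s = …s_{-2}s_{-1} ∈ {0,1}^{-ℕ}` is modelled as
`s : ℕ → Bool` with `s i` representing `s_{-(i+1)}`. It is admissible if every finite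
subword `s_{-(m+1)} … s_{-1}` of it occurs in the (modified) itinerary of some point
of `[0,1]`. -/
def AdmissibleLeft (T : ℝ → ℝ) (c : ℝ) (s : ℕ → Bool) : Prop :=
  ∀ m : ℕ, ∃ x ∈ Set.Icc (0 : ℝ) 1, ∃ p : ℕ,
    ∀ j ≤ m, itin T c x (p + j) = b2f (s (m - j))

/-- The word condition `s_{-(n-1)} … s_{-1} = c₁ … c_{n-1}`, where `ν = c₁c₂…` is the
(modified) kneading sequence, i.e. `c_j = kneading T c (j-1)`; for `n = 1` it is vacuous. -/
noncomputable def PrefixMatch (T : ℝ → ℝ) (c : ℝ) (s : ℕ → Bool) (n : ℕ) : Prop :=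
  ∀ i, i < n - 1 → b2f (s i) = kneading T c (n - 2 - i)

/-- `#_1(c₁…c_k)`: the number of `1`s among the first `k` entries of the kneading sequence. -/
noncomputable def kneadOnes (T : ℝ → ℝ) (c : ℝ) (k : ℕ) : ℕ :=
  ((Finset.range k).filter fun j => kneading T c j = 2).card

/-- The set `{n > 1 : s_{-(n-1)}…s_{-1} = c₁…c_{n-1}, #_1(c₁…c_{n-1}) odd}`;
`τ_L(s)` is its supremum. -/
def tauLSet (T : ℝ → ℝ) (c : ℝ) (s : ℕ → Bool) : Set ℕ :=
  {n | 1 < n ∧ PrefixMatch T c s n ∧ Odd (kneadOnes T c (n - 1))}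

/-- The set `{n ≥ 1 : s_{-(n-1)}…s_{-1} = c₁…c_{n-1}, #_1(c₁…c_{n-1}) even}`;
`τ_R(s)` is its supremum. -/
def tauRSet (T : ℝ → ℝ) (c : ℝ) (s : ℕ → Bool) : Set ℕ :=
  {n | 1 ≤ n ∧ PrefixMatch T c s n ∧ Even (kneadOnes T c (n - 1))}

/-- `x_i` matches the symbol `s_i ∈ {0,1}` : either `x_i` lies strictly on the side
of `c` prescribed by `s_i`, or `x_i = c` (in which case, after the identifications of
itineraries containing `*`, the coordinate matches both symbols). -/
def SymMatch (c y : ℝ) (b : Bool) : Prop :=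
  y = c ∨ (y < c ∧ b = false) ∨ (c < y ∧ b = true)

/-- The basic arc `A(s) = {x ∈ X : ν_i(x) = s_i for all i < 0}` of an admissible
left-infinite sequence `s`. -/
def basicArc (T : ℝ → ℝ) (c : ℝ) (s : ℕ → Bool) : Set (ℕ → ℝ) :=
  {x | x ∈ invLimitSet T ∧ ∀ i : ℕ, SymMatch c (x (i + 1)) (s i)}

/-- The projection `π₀` of the inverse limit to the `0`-th coordinate. -/
def proj0 (x : ℕ → ℝ) : ℝ := x 0


/- ======================= Auxiliary development ======================= -/

namespace S7
open Set Function

/-- weak side condition: `y` lies on the closed side of `c` prescribed by `b`. -/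
def sideOK (c : ℝ) (b : Bool) (y : ℝ) : Prop := if b then c ≤ y else y ≤ c

/-- strict side condition. -/
def sideS (c : ℝ) (b : Bool) (y : ℝ) : Prop := if b then c < y else y < c

lemma sideS.ok {c : ℝ} {b : Bool} {y : ℝ} (h : sideS c b y) : sideOK c b y := by
  cases b <;> simp only [sideS, sideOK, if_true, if_false] at * <;> exact le_of_lt h

lemma sideS_of_ok_ne {c : ℝ} {b : Bool} {y : ℝ} (h : sideOK c b y) (hne : y ≠ c) :
    sideS c b y := by
  cases b <;> simp only [sideS, sideOK, if_true, if_false] at * <;>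
    [exact lt_of_le_of_ne h hne; exact lt_of_le_of_ne h (Ne.symm hne)]

lemma sideOK_c (c : ℝ) (b : Bool) : sideOK c b c := by
  cases b <;> simp [sideOK]

/-- number of `true`s among `F 0, …, F (k-1)`. -/
def cnt (F : ℕ → Bool) (k : ℕ) : ℕ :=
  ((Finset.range k).filter fun j => F j = true).card

lemma cnt_succ (F : ℕ → Bool) (k : ℕ) :
    cnt F (k + 1) = cnt F k + (if F k then 1 else 0) := by
  unfold cnt
  rw [Finset.range_add_one, Finset.filter_insert]
  by_cases h : F k = true
  · rw [if_pos h, if_pos h, Finset.card_insert_of_notMem (by simp)]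
  · rw [if_neg h, if_neg (by simpa using h), Nat.add_zero]

section Basics

variable {T : ℝ → ℝ} {c : ℝ}

lemma uni_cont (hT : IsUnimodal T c) : ContinuousOn T (Icc 0 1) := hT.1
lemma uni_maps (hT : IsUnimodal T c) : MapsTo T (Icc 0 1) (Icc 0 1) := hT.2.1
lemma uni_T0 (hT : IsUnimodal T c) : T 0 = 0 := hT.2.2.1
lemma uni_c0 (hT : IsUnimodal T c) : 0 < c := hT.2.2.2.1
lemma uni_c1 (hT : IsUnimodal T c) : c < 1 := hT.2.2.2.2.1
lemma uni_mono (hT : IsUnimodal T c) : StrictMonoOn T (Icc 0 c) := hT.2.2.2.2.2.1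
lemma uni_anti (hT : IsUnimodal T c) : StrictAntiOn T (Icc c 1) := hT.2.2.2.2.2.2

lemma c_mem01 (hT : IsUnimodal T c) : c ∈ Icc (0:ℝ) 1 :=
  ⟨(uni_c0 hT).le, (uni_c1 hT).le⟩

lemma iter_mem01 (hT : IsUnimodal T c) {x : ℝ} (hx : x ∈ Icc (0:ℝ) 1) (n : ℕ) :
    T^[n] x ∈ Icc (0:ℝ) 1 := by
  induction n with
  | zero => simpa using hx
  | succ n ih => rw [Function.iterate_succ_apply']; exact uni_maps hT ih

lemma Tc_mem01 (hT : IsUnimodal T c) : T c ∈ Icc (0:ℝ) 1 := uni_maps hT (c_mem01 hT)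

/-- `T c` is the maximum value of `T` on `[0,1]`. -/
lemma le_Tc (hT : IsUnimodal T c) {x : ℝ} (hx : x ∈ Icc (0:ℝ) 1) : T x ≤ T c := by
  rcases le_or_gt x c with h | h
  · exact (uni_mono hT).monotoneOn ⟨hx.1, h⟩ ⟨(uni_c0 hT).le, le_rfl⟩ h
  · exact le_of_lt <| (uni_anti hT) ⟨le_rfl, (uni_c1 hT).le⟩ ⟨h.le, hx.2⟩ h

lemma lt_Tc (hT : IsUnimodal T c) {x : ℝ} (hx : x ∈ Icc (0:ℝ) 1) (hne : x ≠ c) :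
    T x < T c := by
  rcases le_or_gt x c with h | h
  · exact (uni_mono hT) ⟨hx.1, h⟩ ⟨(uni_c0 hT).le, le_rfl⟩ (lt_of_le_of_ne h hne)
  · exact (uni_anti hT) ⟨le_rfl, (uni_c1 hT).le⟩ ⟨h.le, hx.2⟩ h

lemma iter_contOn (hT : IsUnimodal T c) (n : ℕ) :
    ContinuousOn (T^[n]) (Icc (0:ℝ) 1) := by
  induction n with
  | zero => simpa using continuousOn_id
  | succ n ih =>
      have : T^[n+1] = T ∘ T^[n] := by
        funext x; exact Function.iterate_succ_apply' T n x
      rw [this]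
      exact (uni_cont hT).comp ih (fun x hx => iter_mem01 hT hx n)

/-- Parity-monotonicity: if the orbits of `a < b` follow the same prescribed sides
for `k` steps then `T^[k]` preserves or reverses their order according to the parity
of the number of `true` (i.e. right, decreasing) sides. -/
lemma parity_mono (hT : IsUnimodal T c) (F : ℕ → Bool) :
    ∀ (k : ℕ) (a b : ℝ), a ∈ Icc (0:ℝ) 1 → b ∈ Icc (0:ℝ) 1 →
    (∀ j < k, sideOK c (F j) (T^[j] a) ∧ sideOK c (F j) (T^[j] b)) →
    a < b →
    (Even (cnt F k) → T^[k] a < T^[k] b) ∧ (Odd (cnt F k) → T^[k] b < T^[k] a) := by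
  intro k
  induction k with
  | zero =>
      intro a b _ _ _ hab
      constructor
      · intro _; simpa using hab
      · intro h
        exfalso
        have : cnt F 0 = 0 := by simp [cnt]
        rw [this] at h
        exact (Nat.not_odd_iff_even.mpr (Even.zero)) h
  | succ k ih =>
      intro a b ha hb hside hab
      have hsk := hside k (Nat.lt_succ_self k)
      have hA := iter_mem01 hT ha k
      have hB := iter_mem01 hT hb k
      have ihab := ih a b ha hb (fun j hj => hside j (hj.trans (Nat.lt_succ_self k))) hab
      have hstep : ∀ u v : ℝ, u ∈ Icc (0:ℝ) 1 → v ∈ Icc (0:ℝ) 1 →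
          sideOK c (F k) u → sideOK c (F k) v → u < v →
          (F k = false → T u < T v) ∧ (F k = true → T v < T u) := by
        intro u v hu hv hsu hsv huv
        constructor
        · intro hf
          rw [hf] at hsu hsv
          simp only [sideOK, if_false] at hsu hsv
          exact (uni_mono hT) ⟨hu.1, hsu⟩ ⟨hv.1, hsv⟩ huv
        · intro hf
          rw [hf] at hsu hsv
          simp only [sideOK, if_true] at hsu hsv
          exact (uni_anti hT) ⟨hsu, hu.2⟩ ⟨hsv, hv.2⟩ huv
      have e1 : T^[k+1] a = T (T^[k] a) := Function.iterate_succ_apply' T k a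
      have e2 : T^[k+1] b = T (T^[k] b) := Function.iterate_succ_apply' T k b
      rw [cnt_succ, e1, e2]
      cases hf : F k with
      | false =>
        simp only [Bool.false_eq_true, if_false, Nat.add_zero]
        constructor
        · intro hev
          exact (hstep _ _ hA hB hsk.1 hsk.2 (ihab.1 hev)).1 hf
        · intro hodd
          exact (hstep _ _ hB hA hsk.2 hsk.1 (ihab.2 hodd)).1 hf
      | true =>
        simp only [if_true]
        constructor
        · intro hev
          have hodd : Odd (cnt F k) :=
            Nat.not_even_iff_odd.mp (Nat.even_add_one.mp hev)
          exact (hstep _ _ hB hA hsk.2 hsk.1 (ihab.2 hodd)).2 hf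
        · intro hodd'
          have hev : Even (cnt F k) := by
            rcases Nat.even_or_odd (cnt F k) with h | h
            · exact h
            · exfalso
              have : Even (cnt F k + 1) := Nat.even_add_one.mpr (Nat.not_even_iff_odd.mpr h)
              exact (Nat.not_odd_iff_even.mpr this) hodd'
          exact (hstep _ _ hA hB hsk.1 hsk.2 (ihab.1 hev)).2 hf

/-- weak version of parity-monotonicity. -/
lemma parity_mono_le (hT : IsUnimodal T c) (F : ℕ → Bool) (k : ℕ) (a b : ℝ)
    (ha : a ∈ Icc (0:ℝ) 1) (hb : b ∈ Icc (0:ℝ) 1)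
    (hside : ∀ j < k, sideOK c (F j) (T^[j] a) ∧ sideOK c (F j) (T^[j] b))
    (hab : a ≤ b) :
    (Even (cnt F k) → T^[k] a ≤ T^[k] b) ∧ (Odd (cnt F k) → T^[k] b ≤ T^[k] a) := by
  rcases eq_or_lt_of_le hab with h | h
  · subst h; exact ⟨fun _ => le_rfl, fun _ => le_rfl⟩
  · have := parity_mono hT F k a b ha hb hside h
    exact ⟨fun he => (this.1 he).le, fun ho => (this.2 ho).le⟩

end Basics

section Knead

variable {T : ℝ → ℝ} {c : ℝ}

lemma fin3_cases (v : Fin 3) : v = 0 ∨ v = 1 ∨ v = 2 := by revert v; decide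

lemma raw_eq_zero_iff {x : ℝ} {n : ℕ} : rawItin T c x n = 0 ↔ T^[n] x < c := by
  unfold rawItin
  split_ifs with h1 h2
  · simp [h1]
  · simp [h1, h2]
  · constructor
    · intro h; exact absurd h (by decide)
    · intro h; exact absurd h h1

lemma raw_eq_one_iff {x : ℝ} {n : ℕ} : rawItin T c x n = 1 ↔ T^[n] x = c := by
  unfold rawItin
  split_ifs with h1 h2
  · constructor
    · intro h; exact absurd h (by decide)
    · intro h; exact absurd h (by rw [h] at h1; exact absurd h1 (lt_irrefl c))
  · simp [h2]
  · constructor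
    · intro h; exact absurd h (by decide)
    · intro h; exact absurd h h2

lemma raw_eq_two_iff {x : ℝ} {n : ℕ} : rawItin T c x n = 2 ↔ c < T^[n] x := by
  unfold rawItin
  split_ifs with h1 h2
  · constructor
    · intro h; exact absurd h (by decide)
    · intro h; exact absurd h1 (by push_neg; exact h.le)
  · constructor
    · intro h; exact absurd h (by decide)
    · intro h; rw [h2] at h; exact absurd h (lt_irrefl c)
  · push_neg at h1
    simp [lt_of_le_of_ne h1 (Ne.symm h2)]

lemma b2f_ne_one (b : Bool) : b2f b ≠ 1 := by cases b <;> decide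
lemma b2f_eq_two_iff (b : Bool) : b2f b = 2 ↔ b = true := by cases b <;> decide
lemma b2f_eq_zero_iff (b : Bool) : b2f b = 0 ↔ b = false := by cases b <;> decide

section Periodic

variable (hq : ∃ i, rawItin T c (T c) i = 1)

/-- the two candidate periodic sequences. -/
noncomputable def wfun (T : ℝ → ℝ) (c : ℝ) (hq : ∃ i, rawItin T c (T c) i = 1)
    (b : Fin 3) : ℕ → Fin 3 :=
  fun j => if j % (Nat.find hq + 1) = Nat.find hq then b
           else rawItin T c (T c) (j % (Nat.find hq + 1))

lemma hit_c : T^[Nat.find hq] (T c) = c := raw_eq_one_iff.mp (Nat.find_spec hq)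

lemma no_hit_before {j : ℕ} (hj : j < Nat.find hq) : T^[j] (T c) ≠ c :=
  fun h => Nat.find_min hq hj (raw_eq_one_iff.mpr h)

lemma period_Tc : T^[Nat.find hq + 1] (T c) = T c := by
  rw [Function.iterate_succ_apply', hit_c hq]

lemma iter_period : ∀ (t r : ℕ), T^[r + (Nat.find hq + 1) * t] (T c) = T^[r] (T c) := by
  intro t
  induction t with
  | zero => intro r; simp
  | succ t ih =>
      intro r
      have h1 : r + (Nat.find hq + 1) * (t+1) = (Nat.find hq + 1) + (r + (Nat.find hq + 1) * t) := by ring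
      rw [h1, Nat.add_comm (Nat.find hq + 1), Function.iterate_add_apply]
      rw [period_Tc hq]
      exact ih r

lemma iter_mod (j : ℕ) :
    T^[j] (T c) = T^[j % (Nat.find hq + 1)] (T c) := by
  conv_lhs => rw [← Nat.mod_add_div j (Nat.find hq + 1)]
  exact iter_period hq (j / (Nat.find hq + 1)) (j % (Nat.find hq + 1))

open Classical in
lemma kneading_def_periodic :
    kneading T c = if PlexLe (wfun T c hq 0) (wfun T c hq 2) then wfun T c hq 0
                   else wfun T c hq 2 := by
  unfold kneading
  rw [dif_pos hq]
  rfl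

lemma wfun_agree {b : Fin 3} {i : ℕ} (hi : i < Nat.find hq) :
    wfun T c hq b i = rawItin T c (T c) i := by
  unfold wfun
  have h1 : i % (Nat.find hq + 1) = i := Nat.mod_eq_of_lt (hi.trans (Nat.lt_succ_self _))
  rw [h1, if_neg (Nat.ne_of_lt hi)]

lemma wfun_at_find (b : Fin 3) : wfun T c hq b (Nat.find hq) = b := by
  unfold wfun
  rw [Nat.mod_eq_of_lt (Nat.lt_succ_self _), if_pos rfl]

lemma onesCount_wfun_eq :
    onesCount (wfun T c hq 0) (Nat.find hq) = onesCount (rawItin T c (T c)) (Nat.find hq) := by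
  unfold onesCount
  congr 1
  apply Finset.filter_congr
  intro i hi
  rw [wfun_agree hq (Finset.mem_range.mp hi)]

lemma plexLe_iff :
    PlexLe (wfun T c hq 0) (wfun T c hq 2) ↔
      Even (onesCount (rawItin T c (T c)) (Nat.find hq)) := by
  constructor
  · rintro (⟨k, hagree, hne, hcases⟩ | heq)
    · rcases Nat.lt_trichotomy k (Nat.find hq) with hk | hk | hk
      · exact absurd (by rw [wfun_agree hq hk, wfun_agree hq hk]) hne
      · subst hk
        rcases hcases with ⟨_, he⟩ | ⟨hlt, _⟩
        · rwa [onesCount_wfun_eq hq] at he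
        · rw [wfun_at_find, wfun_at_find] at hlt
          exact absurd hlt (by decide)
      · have := hagree (Nat.find hq) hk
        rw [wfun_at_find, wfun_at_find] at this
        exact absurd this (by decide)
    · have := congrFun heq (Nat.find hq)
      rw [wfun_at_find, wfun_at_find] at this
      exact absurd this (by decide)
  · intro he
    left
    refine ⟨Nat.find hq, fun i hi => by rw [wfun_agree hq hi, wfun_agree hq hi], ?_, ?_⟩
    · rw [wfun_at_find, wfun_at_find]; decide
    · left
      rw [wfun_at_find, wfun_at_find, onesCount_wfun_eq hq]
      exact ⟨by decide, he⟩

/-- the chosen branch symbol at the `*`-slots. -/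
noncomputable def betaF (T : ℝ → ℝ) (c : ℝ) (hq : ∃ i, rawItin T c (T c) i = 1) : Fin 3 :=
  if Even (onesCount (rawItin T c (T c)) (Nat.find hq)) then 0 else 2

lemma kneading_periodic_eq (j : ℕ) :
    kneading T c j = if j % (Nat.find hq + 1) = Nat.find hq then betaF T c hq
                     else rawItin T c (T c) (j % (Nat.find hq + 1)) := by
  rw [kneading_def_periodic hq]
  unfold betaF
  by_cases he : Even (onesCount (rawItin T c (T c)) (Nat.find hq))
  · rw [if_pos ((plexLe_iff hq).mpr he), if_pos he]; rfl
  · rw [if_neg (fun hp => he ((plexLe_iff hq).mp hp)), if_neg he]; rfl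

lemma betaF_or : betaF T c hq = 0 ∨ betaF T c hq = 2 := by
  unfold betaF; split_ifs <;> simp

lemma kneading_periodic_shift (j : ℕ) :
    kneading T c (j + (Nat.find hq + 1)) = kneading T c j := by
  rw [kneading_periodic_eq hq, kneading_periodic_eq hq, Nat.add_mod_right]

end Periodic

lemma kneading_nonperiodic (hq : ¬ ∃ i, rawItin T c (T c) i = 1) :
    kneading T c = rawItin T c (T c) := by
  unfold kneading
  rw [dif_neg hq]

lemma knead_ne_one (j : ℕ) : kneading T c j ≠ 1 := by
  by_cases hq : ∃ i, rawItin T c (T c) i = 1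
  · rw [kneading_periodic_eq hq]
    split_ifs with h
    · rcases betaF_or hq with h2 | h2 <;> rw [h2] <;> decide
    · have hlt : j % (Nat.find hq + 1) < Nat.find hq :=
        lt_of_le_of_ne (Nat.lt_succ_iff.mp (Nat.mod_lt _ (Nat.succ_pos _))) h
      exact Nat.find_min hq hlt
  · rw [kneading_nonperiodic hq]
    exact fun h => hq ⟨j, h⟩

lemma knead_or (j : ℕ) : kneading T c j = 0 ∨ kneading T c j = 2 := by
  rcases fin3_cases (kneading T c j) with h | h | h
  · exact Or.inl h
  · exact absurd h (knead_ne_one j)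
  · exact Or.inr h

lemma knead_side2 {j : ℕ} (h : kneading T c j = 2) : c ≤ T^[j] (T c) := by
  by_cases hq : ∃ i, rawItin T c (T c) i = 1
  · rw [kneading_periodic_eq hq] at h
    split_ifs at h with hslot
    · rw [iter_mod hq j, hslot, hit_c hq]
    · rw [iter_mod hq j]
      exact (raw_eq_two_iff.mp h).le
  · rw [kneading_nonperiodic hq] at h
    exact (raw_eq_two_iff.mp h).le

lemma knead_side0 {j : ℕ} (h : kneading T c j = 0) : T^[j] (T c) ≤ c := by
  by_cases hq : ∃ i, rawItin T c (T c) i = 1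
  · rw [kneading_periodic_eq hq] at h
    split_ifs at h with hslot
    · rw [iter_mod hq j, hslot, hit_c hq]
    · rw [iter_mod hq j]
      exact (raw_eq_zero_iff.mp h).le
  · rw [kneading_nonperiodic hq] at h
    exact (raw_eq_zero_iff.mp h).le

lemma knead_strict2 {j : ℕ} (hne : T^[j] (T c) ≠ c) :
    (kneading T c j = 2 ↔ c < T^[j] (T c)) := by
  by_cases hq : ∃ i, rawItin T c (T c) i = 1
  · rw [kneading_periodic_eq hq]
    split_ifs with hslot
    · exact absurd (by rw [iter_mod hq j, hslot, hit_c hq]) hne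
    · rw [iter_mod hq j] at hne ⊢
      exact raw_eq_two_iff
  · rw [kneading_nonperiodic hq]; exact raw_eq_two_iff

lemma knead_strict0 {j : ℕ} (hne : T^[j] (T c) ≠ c) :
    (kneading T c j = 0 ↔ T^[j] (T c) < c) := by
  by_cases hq : ∃ i, rawItin T c (T c) i = 1
  · rw [kneading_periodic_eq hq]
    split_ifs with hslot
    · exact absurd (by rw [iter_mod hq j, hslot, hit_c hq]) hne
    · rw [iter_mod hq j] at hne ⊢
      exact raw_eq_zero_iff
  · rw [kneading_nonperiodic hq]; exact raw_eq_zero_iff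

open Classical in
/-- boolean form of the kneading sequence. -/
noncomputable def kb (T : ℝ → ℝ) (c : ℝ) : ℕ → Bool :=
  fun j => if kneading T c j = 2 then true else false

lemma kb_true_iff {j : ℕ} : kb T c j = true ↔ kneading T c j = 2 := by
  unfold kb; split_ifs with h <;> simp [h]

lemma kb_false_iff {j : ℕ} : kb T c j = false ↔ kneading T c j = 0 := by
  unfold kb
  split_ifs with h
  · constructor
    · intro hh; exact absurd hh (by decide)
    · intro h0; rw [h0] at h; exact absurd h (by decide)
  · constructor
    · intro _
      rcases knead_or (T := T) (c := c) j with h0 | h2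
      · exact h0
      · exact absurd h2 h
    · intro _; rfl

lemma kneadOnes_eq_cnt (k : ℕ) : kneadOnes T c k = cnt (kb T c) k := by
  unfold kneadOnes cnt
  congr 1
  apply Finset.filter_congr
  intro j _
  rw [kb_true_iff]

lemma knead_sideOK (j : ℕ) : sideOK c (kb T c j) (T^[j] (T c)) := by
  cases hk : kb T c j
  · simp only [sideOK, if_false]
    exact knead_side0 (kb_false_iff.mp hk)
  · simp only [sideOK, if_true]
    exact knead_side2 (kb_true_iff.mp hk)

lemma b2f_knead_sideOK {b : Bool} {j : ℕ} (h : b2f b = kneading T c j) :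
    kb T c j = b := by
  cases b
  · exact kb_false_iff.mpr (by rw [← h]; rfl)
  · exact kb_true_iff.mpr (by rw [← h]; rfl)

end Knead

section Mach

open Set

variable (T : ℝ → ℝ) (c : ℝ) (s : ℕ → Bool)

/-- the cylinder prescribed by the word `s (n-1), …, s 0` (deepest first). -/
def Cyl (n : ℕ) : Set ℝ := {y | ∀ j < n, sideOK c (s (n - 1 - j)) (T^[j] y)}

def Jset (n : ℕ) : Set ℝ := Icc 0 (T c) ∩ Cyl T c s n

def Pset (n : ℕ) : Set ℝ := T^[n] '' Jset T c s n

def PP : Set ℝ := ⋂ n, Pset T c s n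

variable {T c s}

lemma symMatch_sideOK {y : ℝ} {b : Bool} (h : SymMatch c y b) : sideOK c b y := by
  rcases h with h | ⟨h, hb⟩ | ⟨h, hb⟩
  · rw [h]; exact sideOK_c c b
  · subst hb; simpa [sideOK] using h.le
  · subst hb; simpa [sideOK] using h.le

lemma sideOK_symMatch {y : ℝ} {b : Bool} (h : sideOK c b y) : SymMatch c y b := by
  cases b
  · simp only [sideOK, if_false] at h
    rcases lt_or_eq_of_le h with h | h
    · exact Or.inr (Or.inl ⟨h, rfl⟩)
    · exact Or.inl h
  · simp only [sideOK, if_true] at h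
    rcases lt_or_eq_of_le h with h | h
    · exact Or.inr (Or.inr ⟨h, rfl⟩)
    · exact Or.inl h.symm

lemma Jset_sub01 (hT : IsUnimodal T c) (n : ℕ) : Jset T c s n ⊆ Icc (0:ℝ) 1 :=
  fun y hy => ⟨hy.1.1, hy.1.2.trans (Tc_mem01 hT).2⟩

lemma iter_shift {x : ℝ} {f t : ℕ} (hf : T^[f] x = c) (ht : f < t) :
    T^[t] x = T^[t - f - 1] (T c) := by
  obtain ⟨m, rfl⟩ : ∃ m, t = m + (1 + f) := ⟨t - f - 1, by omega⟩
  have e : m + (1 + f) - f - 1 = m := by omega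
  rw [e, Function.iterate_add_apply, Function.iterate_add_apply,
    Function.iterate_one, hf]

/-- if the modified itinerary of `x` shows symbol `b ∈ {0,1}` at time `t`, then `T^[t] x`
lies on the closed side of `c` prescribed by `b`. -/
lemma itin_sideOK {x : ℝ} {t : ℕ} {b : Bool}
    (h : itin T c x t = b2f b) : sideOK c b (T^[t] x) := by
  unfold itin at h
  by_cases hh : ∃ i, T^[i] x = c
  · rw [dif_pos hh] at h
    rcases Nat.lt_trichotomy t (Nat.find hh) with hlt | heq | hgt
    · rw [if_pos hlt] at h
      cases b
      · simp only [sideOK, if_false]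
        exact (raw_eq_zero_iff.mp (by rw [h]; rfl)).le
      · simp only [sideOK, if_true]
        exact (raw_eq_two_iff.mp (by rw [h]; rfl)).le
    · rw [if_neg (by omega), if_pos heq] at h
      exact absurd h.symm (b2f_ne_one b)
    · rw [if_neg (by omega), if_neg (by omega)] at h
      have hx : T^[t] x = T^[t - Nat.find hh - 1] (T c) :=
        iter_shift (Nat.find_spec hh) hgt
      rw [hx]
      cases b
      · simp only [sideOK, if_false]
        exact knead_side0 (by rw [h]; rfl)
      · simp only [sideOK, if_true]
        exact knead_side2 (by rw [h]; rfl)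
  · rw [dif_neg hh] at h
    cases b
    · simp only [sideOK, if_false]
      exact (raw_eq_zero_iff.mp (by rw [h]; rfl)).le
    · simp only [sideOK, if_true]
      exact (raw_eq_two_iff.mp (by rw [h]; rfl)).le

lemma Jset_nonempty (hT : IsUnimodal T c) (hadm : AdmissibleLeft T c s) (n : ℕ) :
    (Jset T c s n).Nonempty := by
  obtain ⟨x, hx, p, hp⟩ := hadm n
  refine ⟨T^[p+1] x, ⟨?_, ?_⟩, ?_⟩
  · exact (iter_mem01 hT hx (p+1)).1
  · rw [Function.iterate_succ_apply']
    exact le_Tc hT (iter_mem01 hT hx p)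
  · intro j hj
    have e1 : T^[j] (T^[p+1] x) = T^[p + (j+1)] x := by
      rw [← Function.iterate_add_apply]
      congr 1
      omega
    rw [e1]
    have := hp (j+1) (by omega)
    have e2 : n - (j+1) = n - 1 - j := by omega
    rw [e2] at this
    exact itin_sideOK this

lemma sideSet_closed (c : ℝ) (b : Bool) : IsClosed {y : ℝ | sideOK c b y} := by
  cases b
  · exact isClosed_Iic (a := c)
  · exact isClosed_Ici (a := c)

lemma Jset_eq_inter (hT : IsUnimodal T c) (n : ℕ) :
    Jset T c s n =
      Icc 0 (T c) ∩ ⋂ (j : ℕ) (_ : j < n),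
        (Icc (0:ℝ) 1 ∩ T^[j] ⁻¹' {y | sideOK c (s (n - 1 - j)) y}) := by
  ext y
  constructor
  · rintro ⟨h1, h2⟩
    refine ⟨h1, ?_⟩
    simp only [mem_iInter, mem_inter_iff, mem_preimage]
    intro j hj
    exact ⟨⟨h1.1, h1.2.trans (Tc_mem01 hT).2⟩, h2 j hj⟩
  · rintro ⟨h1, h2⟩
    refine ⟨h1, fun j hj => ?_⟩
    simp only [mem_iInter, mem_inter_iff, mem_preimage] at h2
    exact (h2 j hj).2

lemma Jset_compact (hT : IsUnimodal T c) (n : ℕ) : IsCompact (Jset T c s n) := by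
  rw [Jset_eq_inter hT n]
  apply IsCompact.inter_right isCompact_Icc
  apply isClosed_biInter
  intro j _
  exact (iter_contOn hT j).preimage_isClosed_of_isClosed isClosed_Icc
    (sideSet_closed c _)

lemma Pset_compact (hT : IsUnimodal T c) (n : ℕ) : IsCompact (Pset T c s n) :=
  (Jset_compact hT n).image_of_continuousOn ((iter_contOn hT n).mono (Jset_sub01 hT n))

lemma Pset_nonempty (hT : IsUnimodal T c) (hadm : AdmissibleLeft T c s) (n : ℕ) :
    (Pset T c s n).Nonempty := (Jset_nonempty hT hadm n).image _

lemma Pset_sub01 (hT : IsUnimodal T c) (n : ℕ) : Pset T c s n ⊆ Icc (0:ℝ) 1 := by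
  rintro y ⟨z, hz, rfl⟩
  exact iter_mem01 hT (Jset_sub01 hT n hz) n

lemma T_Jset_sub (hT : IsUnimodal T c) (n : ℕ) :
    T '' (Jset T c s (n+1)) ⊆ Jset T c s n := by
  rintro y ⟨z, hz, rfl⟩
  have hz01 : z ∈ Icc (0:ℝ) 1 := Jset_sub01 hT (n+1) hz
  refine ⟨⟨(uni_maps hT hz01).1, le_Tc hT hz01⟩, ?_⟩
  intro j hj
  have e1 : T^[j] (T z) = T^[j+1] z := by
    rw [← Function.iterate_succ_apply]
  rw [e1]
  have := hz.2 (j+1) (by omega)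
  have e2 : n + 1 - 1 - (j+1) = n - 1 - j := by omega
  rwa [e2] at this

lemma Pset_succ_sub (hT : IsUnimodal T c) (n : ℕ) :
    Pset T c s (n+1) ⊆ Pset T c s n := by
  intro y hy
  obtain ⟨z, hz, rfl⟩ := hy
  refine ⟨T z, T_Jset_sub hT n ⟨z, hz, rfl⟩, ?_⟩
  rw [← Function.iterate_succ_apply]

lemma Pset_mono (hT : IsUnimodal T c) {k n : ℕ} (h : k ≤ n) :
    Pset T c s n ⊆ Pset T c s k := by
  induction n with
  | zero => have : k = 0 := by omega
            subst this; exact fun _ h => h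
  | succ n ih =>
      rcases Nat.lt_or_ge k (n+1) with h' | h'
      · exact fun y hy => ih (by omega) (Pset_succ_sub hT n hy)
      · have : k = n + 1 := by omega
        subst this; exact fun _ h => h

lemma cnt_rev (F : ℕ → Bool) (n : ℕ) : cnt (fun j => F (n - 1 - j)) n = cnt F n := by
  unfold cnt
  apply Finset.card_bij' (fun j _ => n - 1 - j) (fun j _ => n - 1 - j)
  · intro a ha
    simp only [Finset.mem_filter, Finset.mem_range] at ha ⊢
    exact ⟨by omega, ha.2⟩
  · intro a ha
    simp only [Finset.mem_filter, Finset.mem_range] at ha ⊢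
    refine ⟨by omega, ?_⟩
    have : n - 1 - (n - 1 - a) = a := by omega
    rw [this]; exact ha.2
  · intro a ha
    simp only [Finset.mem_filter, Finset.mem_range] at ha
    omega
  · intro a ha
    simp only [Finset.mem_filter, Finset.mem_range] at ha
    omega

/-- parity-monotonicity of `T^[n]` on the cylinder set. -/
lemma J_parity_mono (hT : IsUnimodal T c) {n : ℕ} {a b : ℝ}
    (ha : a ∈ Jset T c s n) (hb : b ∈ Jset T c s n) (hab : a < b) :
    (Even (cnt s n) → T^[n] a < T^[n] b) ∧ (Odd (cnt s n) → T^[n] b < T^[n] a) := by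
  have := parity_mono hT (fun j => s (n - 1 - j)) n a b (Jset_sub01 hT n ha)
    (Jset_sub01 hT n hb) (fun j hj => ⟨ha.2 j hj, hb.2 j hj⟩) hab
  rwa [cnt_rev] at this

end Mach

section Chain

open Set Filter

variable {T : ℝ → ℝ} {c : ℝ} {s : ℕ → Bool}

lemma PP_sub (n : ℕ) : PP T c s ⊆ Pset T c s n := iInter_subset _ n

lemma sSup_PP_spec (hT : IsUnimodal T c) (hadm : AdmissibleLeft T c s) :
    sSup (PP T c s) ∈ PP T c s ∧
    (∀ n, sSup (PP T c s) ≤ sSup (Pset T c s n)) ∧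
    ∀ ε > 0, ∃ n, sSup (Pset T c s n) < sSup (PP T c s) + ε := by
  set mx : ℕ → ℝ := fun n => sSup (Pset T c s n) with hmx
  have hbdd : ∀ n, BddAbove (Pset T c s n) := fun n => (Pset_compact hT n).bddAbove
  have hne : ∀ n, (Pset T c s n).Nonempty := Pset_nonempty hT hadm
  have hmem : ∀ n, mx n ∈ Pset T c s n := fun n =>
    (Pset_compact hT n).sSup_mem (hne n)
  have hanti : Antitone mx := by
    apply antitone_nat_of_succ_le
    intro n
    exact csSup_le_csSup (hbdd n) (hne (n+1)) (Pset_succ_sub hT n)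
  have hlb : BddBelow (Set.range mx) := by
    refine ⟨0, ?_⟩
    rintro y ⟨n, rfl⟩
    exact (Pset_sub01 hT n (hmem n)).1
  set L := ⨅ n, mx n with hL
  have htend : Tendsto mx atTop (nhds L) := tendsto_atTop_ciInf hanti hlb
  have hLmem : L ∈ PP T c s := by
    simp only [PP, mem_iInter]
    intro k
    have hev : ∀ᶠ n in atTop, mx n ∈ Pset T c s k := by
      filter_upwards [eventually_ge_atTop k] with n hn
      exact Pset_mono hT hn (hmem n)
    exact (Pset_compact hT k).isClosed.mem_of_tendsto htend hev
  have hPPne : (PP T c s).Nonempty := ⟨L, hLmem⟩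
  have hsup_le : ∀ n, sSup (PP T c s) ≤ mx n := fun n =>
    csSup_le_csSup (hbdd n) hPPne (PP_sub n)
  have hL_le : L ≤ sSup (PP T c s) := by
    apply le_csSup _ hLmem
    exact (hbdd 0).mono (PP_sub 0)
  have hsup_eq : sSup (PP T c s) = L := by
    apply le_antisymm _ hL_le
    exact le_ciInf hsup_le
  refine ⟨by rw [hsup_eq]; exact hLmem, hsup_le, ?_⟩
  intro ε hε
  have : L < sSup (PP T c s) + ε := by rw [hsup_eq]; linarith
  rw [hL] at this
  obtain ⟨n, hn⟩ := exists_lt_of_ciInf_lt this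
  exact ⟨n, hn⟩

lemma sInf_PP_spec (hT : IsUnimodal T c) (hadm : AdmissibleLeft T c s) :
    sInf (PP T c s) ∈ PP T c s ∧
    (∀ n, sInf (Pset T c s n) ≤ sInf (PP T c s)) ∧
    ∀ ε > 0, ∃ n, sInf (PP T c s) - ε < sInf (Pset T c s n) := by
  set mn : ℕ → ℝ := fun n => sInf (Pset T c s n) with hmn
  have hbdd : ∀ n, BddBelow (Pset T c s n) := fun n => (Pset_compact hT n).bddBelow
  have hne : ∀ n, (Pset T c s n).Nonempty := Pset_nonempty hT hadm
  have hmem : ∀ n, mn n ∈ Pset T c s n := fun n =>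
    (Pset_compact hT n).sInf_mem (hne n)
  have hmono : Monotone mn := by
    apply monotone_nat_of_le_succ
    intro n
    exact csInf_le_csInf (hbdd n) (hne (n+1)) (Pset_succ_sub hT n)
  have hub : BddAbove (Set.range mn) := by
    refine ⟨1, ?_⟩
    rintro y ⟨n, rfl⟩
    exact (Pset_sub01 hT n (hmem n)).2
  set L := ⨆ n, mn n with hL
  have htend : Tendsto mn atTop (nhds L) := tendsto_atTop_ciSup hmono hub
  have hLmem : L ∈ PP T c s := by
    simp only [PP, mem_iInter]
    intro k
    have hev : ∀ᶠ n in atTop, mn n ∈ Pset T c s k := by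
      filter_upwards [eventually_ge_atTop k] with n hn
      exact Pset_mono hT hn (hmem n)
    exact (Pset_compact hT k).isClosed.mem_of_tendsto htend hev
  have hPPne : (PP T c s).Nonempty := ⟨L, hLmem⟩
  have hle_inf : ∀ n, mn n ≤ sInf (PP T c s) := fun n =>
    csInf_le_csInf (hbdd n) hPPne (PP_sub n)
  have hL_ge : sInf (PP T c s) ≤ L := by
    apply csInf_le _ hLmem
    exact (hbdd 0).mono (PP_sub 0)
  have hinf_eq : sInf (PP T c s) = L := by
    apply le_antisymm hL_ge
    exact ciSup_le hle_inf
  refine ⟨by rw [hinf_eq]; exact hLmem, hle_inf, ?_⟩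
  intro ε hε
  have : sInf (PP T c s) - ε < L := by rw [hinf_eq]; linarith
  rw [hL] at this
  obtain ⟨n, hn⟩ := exists_lt_of_lt_ciSup this
  exact ⟨n, hn⟩

lemma iter_coord {x : ℕ → ℝ} (hrel : ∀ n, T (x (n + 1)) = x n) :
    ∀ {j n : ℕ}, j ≤ n → T^[j] (x n) = x (n - j) := by
  intro j
  induction j with
  | zero => intro n _; simp
  | succ j ih =>
      intro n hj
      have h1 : T^[j+1] (x n) = T^[j] (T (x n)) := Function.iterate_succ_apply T j (x n)
      obtain ⟨m, rfl⟩ : ∃ m, n = m + 1 := ⟨n - 1, by omega⟩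
      rw [h1, hrel m]
      have := ih (n := m) (by omega)
      rw [this]
      congr 1
      omega

/-- the projection of the basic arc is exactly `⋂ n, Pset n`. -/
lemma proj_eq_PP (hT : IsUnimodal T c) :
    proj0 '' basicArc T c s = PP T c s := by
  ext y
  constructor
  · rintro ⟨x, ⟨⟨hmem, hrel⟩, hsym⟩, rfl⟩
    simp only [PP, mem_iInter]
    intro n
    refine ⟨x n, ⟨⟨(hmem n).1, ?_⟩, ?_⟩, ?_⟩
    · rw [← hrel n]
      exact le_Tc hT (hmem (n+1))
    · intro j hj
      rw [iter_coord hrel (le_of_lt hj)]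
      have := symMatch_sideOK (hsym (n - 1 - j))
      have e : n - 1 - j + 1 = n - j := by omega
      rwa [e] at this
    · have := iter_coord hrel (le_rfl : n ≤ n)
      simpa [proj0] using this
  · intro hy
    -- build a point of the basic arc above `y` by compactness
    classical
    have hgraph : IsClosed {p : ℝ × ℝ | p.1 ∈ Icc (0:ℝ) 1 ∧ T p.1 = p.2} := by
      have himg : {p : ℝ × ℝ | p.1 ∈ Icc (0:ℝ) 1 ∧ T p.1 = p.2} =
          (fun u => (u, T u)) '' Icc (0:ℝ) 1 := by
        ext ⟨a, b⟩
        simp only [Set.mem_setOf_eq, Set.mem_image]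
        constructor
        · rintro ⟨h1, h2⟩
          exact ⟨a, h1, by rw [h2]⟩
        · rintro ⟨u, hu, huv⟩
          have h1 : u = a := congrArg Prod.fst huv
          have h2 : T u = b := congrArg Prod.snd huv
          subst h1
          exact ⟨hu, h2⟩
      rw [himg]
      exact (isCompact_Icc.image_of_continuousOn
        (continuousOn_id.prodMk (uni_cont hT))).isClosed
    have hcl1 : ∀ k : ℕ, IsClosed {x : ℕ → ℝ | x (k+1) ∈ Icc (0:ℝ) 1 ∧ T (x (k+1)) = x k} := by
      intro k
      have hc : Continuous (fun x : ℕ → ℝ => (x (k+1), x k)) :=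
        (continuous_apply (k+1)).prodMk (continuous_apply k)
      exact hgraph.preimage hc
    have hcl2 : ∀ k : ℕ, IsClosed {x : ℕ → ℝ | sideOK c (s k) (x (k+1))} := by
      intro k
      have : {x : ℕ → ℝ | sideOK c (s k) (x (k+1))} =
          (fun x : ℕ → ℝ => x (k+1)) ⁻¹' {v : ℝ | sideOK c (s k) v} := rfl
      rw [this]
      exact (sideSet_closed c (s k)).preimage (continuous_apply (k+1))
    have hKclosed : IsClosed (Set.univ.pi (fun _ : ℕ => Icc (0:ℝ) 1)) :=
      isClosed_set_pi (fun i _ => isClosed_Icc)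
    have hKcomp : IsCompact (Set.univ.pi (fun _ : ℕ => Icc (0:ℝ) 1)) :=
      isCompact_univ_pi (fun _ => isCompact_Icc)
    set G : ℕ → Set (ℕ → ℝ) := fun m =>
      Set.univ.pi (fun _ : ℕ => Icc (0:ℝ) 1) ∩
      ({x | x 0 = y} ∩ ⋂ (k : ℕ) (_ : k < m),
        ({x : ℕ → ℝ | x (k+1) ∈ Icc (0:ℝ) 1 ∧ T (x (k+1)) = x k} ∩
         {x : ℕ → ℝ | sideOK c (s k) (x (k+1))})) with hG
    have hGclosed : ∀ m, IsClosed (G m) := by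
      intro m
      refine hKclosed.inter (IsClosed.inter ?_ ?_)
      · exact isClosed_eq (continuous_apply 0) continuous_const
      · exact isClosed_biInter (fun k _ => (hcl1 k).inter (hcl2 k))
    have hGcomp : ∀ m, IsCompact (G m) := by
      intro m
      refine hKcomp.inter_right (IsClosed.inter ?_ ?_)
      · exact isClosed_eq (continuous_apply 0) continuous_const
      · exact isClosed_biInter (fun k _ => (hcl1 k).inter (hcl2 k))
    have hGne : ∀ m, (G m).Nonempty := by
      intro m
      have hym : y ∈ Pset T c s m := by
        have := hy
        simp only [PP, mem_iInter] at this
        exact this m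
      obtain ⟨z, hz, hzy⟩ := hym
      refine ⟨fun k => if k ≤ m then T^[m - k] z else 0, ?_, ?_, ?_⟩
      · rw [Set.mem_univ_pi]
        intro i
        show (if i ≤ m then T^[m - i] z else 0) ∈ Icc (0:ℝ) 1
        split_ifs with h
        · exact iter_mem01 hT (Jset_sub01 hT m hz) (m - i)
        · exact ⟨le_rfl, by norm_num⟩
      · show (if 0 ≤ m then T^[m - 0] z else 0) = y
        rw [if_pos (Nat.zero_le m), Nat.sub_zero, hzy]
      · rw [mem_iInter]
        intro k
        rw [mem_iInter]
        intro hk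
        have hk1 : k + 1 ≤ m := by omega
        refine ⟨⟨?_, ?_⟩, ?_⟩
        · show (if k + 1 ≤ m then T^[m - (k+1)] z else 0) ∈ Icc (0:ℝ) 1
          rw [if_pos hk1]
          exact iter_mem01 hT (Jset_sub01 hT m hz) (m - (k+1))
        · show T (if k + 1 ≤ m then T^[m - (k+1)] z else 0) =
            (if k ≤ m then T^[m - k] z else 0)
          rw [if_pos hk1, if_pos (by omega : k ≤ m)]
          have e : m - k = (m - (k+1)) + 1 := by omega
          rw [e, Function.iterate_succ_apply']
        · show sideOK c (s k) (if k + 1 ≤ m then T^[m - (k+1)] z else 0)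
          rw [if_pos hk1]
          have := hz.2 (m - (k+1)) (by omega)
          have e : m - 1 - (m - (k+1)) = k := by omega
          rwa [e] at this
    have hGdec : ∀ m, G (m+1) ⊆ G m := by
      intro m x hx
      refine ⟨hx.1, hx.2.1, ?_⟩
      rw [mem_iInter]
      intro k
      rw [mem_iInter]
      intro hk
      have h2 := hx.2.2
      rw [mem_iInter] at h2
      have h2 := h2 k
      rw [mem_iInter] at h2
      exact h2 (by omega)
    obtain ⟨x, hx⟩ := IsCompact.nonempty_iInter_of_sequence_nonempty_isCompact_isClosed
      G hGdec hGne (hGcomp 0) hGclosed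
    have hxm : ∀ m, x ∈ G m := by
      rw [mem_iInter] at hx
      exact hx
    have hxK : ∀ k, x k ∈ Icc (0:ℝ) 1 := by
      have := (hxm 0).1
      rw [Set.mem_univ_pi] at this
      exact this
    have hx0 : x 0 = y := (hxm 0).2.1
    have hxrel : ∀ k, T (x (k+1)) = x k ∧ sideOK c (s k) (x (k+1)) := by
      intro k
      have h2 := (hxm (k+1)).2.2
      rw [mem_iInter] at h2
      have h2 := h2 k
      rw [mem_iInter] at h2
      have h2 := h2 (by omega)
      exact ⟨h2.1.2, h2.2⟩
    exact ⟨x, ⟨⟨hxK, fun k => (hxrel k).1⟩, fun i => sideOK_symMatch (hxrel i).2⟩, hx0⟩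

end Chain

section Match

open Set

variable {T : ℝ → ℝ} {c : ℝ} {s : ℕ → Bool}

/-- any point of `⋂ Pset` is between the values `T^[mm] c` at matching times,
on the side prescribed by the parity. -/
lemma PP_le_match (hT : IsUnimodal T c) {y : ℝ} (hy : y ∈ PP T c s) {mm : ℕ}
    (h1 : 1 ≤ mm) (hpm : PrefixMatch T c s mm) :
    (Even (kneadOnes T c (mm - 1)) → y ≤ T^[mm] c) ∧
    (Odd (kneadOnes T c (mm - 1)) → T^[mm] c ≤ y) := by
  have hyP : y ∈ Pset T c s (mm - 1) := PP_sub (mm - 1) hy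
  obtain ⟨z, hz, hzy⟩ := hyP
  have hz01 : z ∈ Icc (0:ℝ) 1 := Jset_sub01 hT (mm - 1) hz
  have hsides : ∀ j < mm - 1,
      sideOK c (kb T c j) (T^[j] z) ∧ sideOK c (kb T c j) (T^[j] (T c)) := by
    intro j hj
    refine ⟨?_, knead_sideOK j⟩
    have hcyl := hz.2 j hj
    have hpmj := hpm (mm - 2 - j) (by omega)
    have e1 : mm - 2 - (mm - 2 - j) = j := by omega
    rw [e1] at hpmj
    have e2 : mm - 1 - 1 - j = mm - 2 - j := by omega
    rw [e2] at hcyl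
    rwa [← b2f_knead_sideOK hpmj] at hcyl
  have := parity_mono_le hT (kb T c) (mm - 1) z (T c) hz01 (Tc_mem01 hT) hsides hz.1.2
  have hTmm : T^[mm] c = T^[mm - 1] (T c) := by
    conv_lhs => rw [show mm = (mm - 1) + 1 by omega]
    rw [Function.iterate_succ_apply]
  rw [← hzy, hTmm, kneadOnes_eq_cnt]
  exact this

/-- matching times coming from the last hit of `c` along the orbit of a cylinder point. -/
lemma match_of_hit (hT : IsUnimodal T c) {n : ℕ} {γ : ℝ} (hγ : γ ∈ Jset T c s n)
    {j : ℕ} (hjn : j < n) (hhit : T^[j] γ = c)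
    (hmaxhit : ∀ j', j < j' → j' < n → T^[j'] γ ≠ c) :
    PrefixMatch T c s (n - j) ∧ T^[n] γ = T^[n - j] c := by
  have horb : ∀ r, j + 1 + r < n → T^[j + 1 + r] γ = T^[r] (T c) := by
    intro r hr
    have := iter_shift hhit (show j < j + 1 + r by omega)
    have e : j + 1 + r - j - 1 = r := by omega
    rwa [e] at this
  constructor
  · intro i hi
    set r := n - j - 2 - i with hr
    have hi' : i = n - j - 2 - r := by omega
    have hlev : j + 1 + r < n := by omega
    have hval : T^[j + 1 + r] γ = T^[r] (T c) := horb r hlev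
    have hnec : T^[r] (T c) ≠ c := by
      rw [← hval]
      exact hmaxhit (j + 1 + r) (by omega) hlev
    have hcyl := hγ.2 (j + 1 + r) hlev
    have e : n - 1 - (j + 1 + r) = i := by omega
    rw [e, hval] at hcyl
    cases hb : s i
    · rw [hb] at hcyl
      simp only [sideOK, if_false] at hcyl
      have : T^[r] (T c) < c := lt_of_le_of_ne hcyl hnec
      rw [(knead_strict0 hnec).mpr this]
      rfl
    · rw [hb] at hcyl
      simp only [sideOK, if_true] at hcyl
      have : c < T^[r] (T c) := lt_of_le_of_ne hcyl (Ne.symm hnec)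
      rw [(knead_strict2 hnec).mpr this]
      rfl
  · have h1 := iter_shift hhit hjn
    have h2 : T^[n - j] c = T^[n - j - 1] (T c) := by
      conv_lhs => rw [show n - j = (n - j - 1) + 1 by omega]
      rw [Function.iterate_succ_apply]
    rw [h1, h2]

/-- comparison of `T^[n]` over the cylinder with the critical value at a maximal hit. -/
lemma hit_compare (hT : IsUnimodal T c) {n : ℕ} {γ δ : ℝ} (hγ : γ ∈ Jset T c s n)
    (hδ : δ ∈ Jset T c s n) {j : ℕ} (hjn : j < n) (hhit : T^[j] γ = c)
    (hmaxhit : ∀ j', j < j' → j' < n → T^[j'] γ ≠ c) :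
    (Even (kneadOnes T c (n - j - 1)) → T^[n] δ ≤ T^[n] γ) ∧
    (Odd (kneadOnes T c (n - j - 1)) → T^[n] γ ≤ T^[n] δ) := by
  obtain ⟨hpm, hval⟩ := match_of_hit hT hγ hjn hhit hmaxhit
  set u := n - j with hu
  set w := T^[j + 1] δ with hw
  have hδ01 : δ ∈ Icc (0:ℝ) 1 := Jset_sub01 hT n hδ
  have hw01 : w ∈ Icc (0:ℝ) 1 := iter_mem01 hT hδ01 (j+1)
  have hwle : w ≤ T c := by
    rw [hw, Function.iterate_succ_apply']
    exact le_Tc hT (iter_mem01 hT hδ01 j)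
  have hsides : ∀ r < u - 1,
      sideOK c (kb T c r) (T^[r] w) ∧ sideOK c (kb T c r) (T^[r] (T c)) := by
    intro r hr
    refine ⟨?_, knead_sideOK r⟩
    have e0 : T^[r] w = T^[j + 1 + r] δ := by
      rw [hw, ← Function.iterate_add_apply]
      congr 1
      omega
    have hcyl := hδ.2 (j + 1 + r) (by omega)
    have hpmj := hpm (u - 2 - r) (by omega)
    have e1 : u - 2 - (u - 2 - r) = r := by omega
    rw [e1] at hpmj
    have e2 : n - 1 - (j + 1 + r) = u - 2 - r := by omega
    rw [e2] at hcyl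
    rw [e0]
    rwa [← b2f_knead_sideOK hpmj] at hcyl
  have hcomp := parity_mono_le hT (kb T c) (u - 1) w (T c) hw01 (Tc_mem01 hT) hsides hwle
  have hTu : T^[u] c = T^[u - 1] (T c) := by
    conv_lhs => rw [show u = (u - 1) + 1 by omega]
    rw [Function.iterate_succ_apply]
  have hTnδ : T^[u - 1] w = T^[n] δ := by
    rw [hw, ← Function.iterate_add_apply]
    congr 1
    omega
  rw [← kneadOnes_eq_cnt] at hcomp
  constructor
  · intro he
    rw [hval, hTu, ← hTnδ]
    exact hcomp.1 he
  · intro ho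
    rw [hval, hTu, ← hTnδ]
    exact hcomp.2 ho

/-- matching time `n+1` from the critical value sitting in the cylinder without hits. -/
lemma match_Tc (hT : IsUnimodal T c) {n : ℕ} (hTcJ : T c ∈ Jset T c s n)
    (hnohit : ∀ j < n, T^[j] (T c) ≠ c) :
    PrefixMatch T c s (n + 1) ∧ kneadOnes T c n = cnt s n ∧
    T^[n + 1] c = T^[n] (T c) := by
  have hmatch : ∀ j < n, b2f (s (n - 1 - j)) = kneading T c j := by
    intro j hj
    have hcyl := hTcJ.2 j hj
    have hnec := hnohit j hj
    cases hb : s (n - 1 - j)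
    · rw [hb] at hcyl
      simp only [sideOK, if_false] at hcyl
      rw [(knead_strict0 hnec).mpr (lt_of_le_of_ne hcyl hnec)]
      rfl
    · rw [hb] at hcyl
      simp only [sideOK, if_true] at hcyl
      rw [(knead_strict2 hnec).mpr (lt_of_le_of_ne hcyl (Ne.symm hnec))]
      rfl
  refine ⟨?_, ?_, ?_⟩
  · intro i hi
    have hj : n - 1 - i < n := by omega
    have := hmatch (n - 1 - i) hj
    have e : n - 1 - (n - 1 - i) = i := by omega
    rw [e] at this
    have e2 : n + 1 - 2 - i = n - 1 - i := by omega
    rw [e2]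
    exact this
  · rw [kneadOnes_eq_cnt, ← cnt_rev s n]
    unfold cnt
    congr 1
    apply Finset.filter_congr
    intro j hj
    rw [Finset.mem_range] at hj
    rw [kb_true_iff]
    constructor
    · intro h2
      show s (n - 1 - j) = true
      have := hmatch j hj
      rw [h2] at this
      exact (b2f_eq_two_iff _).mp this
    · intro hst
      have hst' : s (n - 1 - j) = true := hst
      have := hmatch j hj
      rw [hst'] at this
      exact this.symm
  · rw [Function.iterate_succ_apply]

end Match

section Perturb

open Set

variable {T : ℝ → ℝ} {c : ℝ} {s : ℕ → Bool}

lemma cont_at (hT : IsUnimodal T c) (n : ℕ) {x : ℝ} (hx : x ∈ Icc (0:ℝ) 1) :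
    ∀ ε > 0, ∃ δ > 0, ∀ y ∈ Icc (0:ℝ) 1, |y - x| < δ → |T^[n] y - T^[n] x| < ε := by
  intro ε hε
  have h := (Metric.continuousOn_iff.mp (iter_contOn hT n)) x hx ε hε
  obtain ⟨δ, hδ, h⟩ := h
  refine ⟨δ, hδ, fun y hy hyx => ?_⟩
  have := h y hy (by rwa [Real.dist_eq])
  rwa [Real.dist_eq] at this

lemma iter_zero (hT : IsUnimodal T c) (n : ℕ) : T^[n] (0:ℝ) = 0 := by
  induction n with
  | zero => rfl
  | succ n ih => rw [Function.iterate_succ_apply', ih, uni_T0 hT]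

lemma Tc_pos (hT : IsUnimodal T c) : 0 < T c := by
  have := (uni_mono hT) (show (0:ℝ) ∈ Icc (0:ℝ) c from ⟨le_rfl, (uni_c0 hT).le⟩)
    ⟨(uni_c0 hT).le, le_rfl⟩ (uni_c0 hT)
  rwa [uni_T0 hT] at this

/-- persistence of strict sides along a finite orbit segment. -/
lemma orbit_persist (hT : IsUnimodal T c) (n : ℕ) {x : ℝ} (hx : x ∈ Icc (0:ℝ) 1) :
    ∃ δ > 0, ∀ y ∈ Icc (0:ℝ) 1, |y - x| < δ → ∀ j < n,
      (T^[j] x < c → T^[j] y < c) ∧ (c < T^[j] x → c < T^[j] y) := by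
  induction n with
  | zero => exact ⟨1, one_pos, fun y _ _ j hj => absurd hj (Nat.not_lt_zero j)⟩
  | succ n ih =>
      obtain ⟨δ1, hδ1, h1⟩ := ih
      by_cases hc : T^[n] x = c
      · refine ⟨δ1, hδ1, fun y hy hyx j hj => ?_⟩
        rcases Nat.lt_or_ge j n with h | h
        · exact h1 y hy hyx j h
        · have : j = n := by omega
          subst this
          rw [hc]
          exact ⟨fun h => absurd h (lt_irrefl c), fun h => absurd h (lt_irrefl c)⟩
      · obtain ⟨δ2, hδ2, h2⟩ := cont_at hT n hx (|T^[n] x - c|)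
          (abs_pos.mpr (sub_ne_zero.mpr hc))
        refine ⟨min δ1 δ2, lt_min hδ1 hδ2, fun y hy hyx j hj => ?_⟩
        rcases Nat.lt_or_ge j n with h | h
        · exact h1 y hy (lt_of_lt_of_le hyx (min_le_left _ _)) j h
        · have : j = n := by omega
          subst this
          have hnear := h2 y hy (lt_of_lt_of_le hyx (min_le_right _ _))
          have habs := abs_lt.mp hnear
          constructor
          · intro hlt
            rw [abs_of_neg (show T^[j] x - c < 0 by linarith)] at habs
            linarith [habs.2]
          · intro hgt
            rw [abs_of_pos (show (0:ℝ) < T^[j] x - c by linarith)] at habs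
            linarith [habs.1]

/-- near `0`, all finite orbits stay strictly below `c`. -/
lemma small_orbit (hT : IsUnimodal T c) (n : ℕ) :
    ∃ η > 0, ∀ y, 0 ≤ y → y ≤ η → ∀ j < n, T^[j] y < c := by
  obtain ⟨δ, hδ, h⟩ := orbit_persist hT n (show (0:ℝ) ∈ Icc (0:ℝ) 1 by norm_num)
  refine ⟨min (δ/2) 1, by positivity, fun y hy0 hyη j hj => ?_⟩
  have hy1 : y ∈ Icc (0:ℝ) 1 := ⟨hy0, hyη.trans (min_le_right _ _)⟩
  have hyδ : |y - 0| < δ := by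
    rw [sub_zero, abs_of_nonneg hy0]
    have := hyη.trans (min_le_left _ _)
    linarith
  have := (h y hy1 hyδ j hj).1
  rw [iter_zero hT j] at this
  exact this (uni_c0 hT)

/-- `0 ∈ Jset` forces the word to be all-`false` and a whole interval inside `Jset`. -/
lemma zero_mem_J (hT : IsUnimodal T c) {n : ℕ} (h0 : (0:ℝ) ∈ Jset T c s n) :
    (∀ j < n, s (n - 1 - j) = false) ∧ ∃ y ∈ Jset T c s n, 0 < y := by
  have hfalse : ∀ j < n, s (n - 1 - j) = false := by
    intro j hj
    have := h0.2 j hj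
    rw [iter_zero hT j] at this
    cases hb : s (n - 1 - j)
    · rfl
    · rw [hb] at this
      simp only [sideOK, if_true] at this
      exact absurd this (by linarith [uni_c0 hT])
  refine ⟨hfalse, ?_⟩
  obtain ⟨η, hη, h⟩ := small_orbit hT n
  set y := min η (T c) with hy
  have hy0 : 0 < y := lt_min hη (Tc_pos hT)
  refine ⟨y, ⟨⟨hy0.le, min_le_right _ _⟩, ?_⟩, hy0⟩
  intro j hj
  rw [hfalse j hj]
  simp only [sideOK, if_false]
  exact (h y hy0.le (min_le_left _ _) j hj).le

end Perturb

section Fold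

open Set

variable {T : ℝ → ℝ} {c : ℝ} {s : ℕ → Bool}

lemma sideS_ne {b : Bool} {y : ℝ} (h : sideS c b y) : y ≠ c := by
  cases b <;> simp only [sideS, if_true, if_false] at h
  · exact ne_of_lt h
  · exact ne_of_gt h

lemma cnt_congr {F G : ℕ → Bool} {k : ℕ} (h : ∀ j < k, F j = G j) : cnt F k = cnt G k := by
  unfold cnt
  congr 1
  apply Finset.filter_congr
  intro j hj
  rw [Finset.mem_range] at hj
  rw [h j hj]

lemma cnt_shift_one (F : ℕ → Bool) (a : ℕ) :
    ∀ t, cnt (fun r => F (a + r)) (t + 1) =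
      (if F a then 1 else 0) + cnt (fun r => F ((a + 1) + r)) t := by
  intro t
  induction t with
  | zero =>
      rw [cnt_succ]
      simp [cnt]
  | succ t ih =>
      rw [cnt_succ, ih, cnt_succ]
      have e : a + (t + 1) = a + 1 + t := by ring
      rw [e]
      ring

section PeriodicFold

variable (hq : ∃ i, rawItin T c (T c) i = 1)

lemma knead_eq_raw_below {j : ℕ} (hj : j < Nat.find hq) :
    kneading T c j = rawItin T c (T c) j := by
  rw [kneading_periodic_eq hq]
  have h1 : j % (Nat.find hq + 1) = j := Nat.mod_eq_of_lt (by omega)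
  rw [h1, if_neg (by omega)]

lemma cnt_kb_eq_kappa :
    cnt (kb T c) (Nat.find hq) = onesCount (rawItin T c (T c)) (Nat.find hq) := by
  unfold cnt onesCount
  congr 1
  apply Finset.filter_congr
  intro j hj
  rw [Finset.mem_range] at hj
  simp only [kb_true_iff, knead_eq_raw_below hq hj]

lemma knead_find_eq_betaF : kneading T c (Nat.find hq) = betaF T c hq := by
  rw [kneading_periodic_eq hq, Nat.mod_eq_of_lt (Nat.lt_succ_self _), if_pos rfl]

lemma kb_find_even (he : Even (onesCount (rawItin T c (T c)) (Nat.find hq))) :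
    kb T c (Nat.find hq) = false := by
  rw [kb_false_iff, knead_find_eq_betaF hq]
  unfold betaF
  rw [if_pos he]

lemma kb_find_odd (ho : ¬ Even (onesCount (rawItin T c (T c)) (Nat.find hq))) :
    kb T c (Nat.find hq) = true := by
  rw [kb_true_iff, knead_find_eq_betaF hq]
  unfold betaF
  rw [if_neg ho]

lemma kb_periodic (j : ℕ) : kb T c (j + (Nat.find hq + 1)) = kb T c j := by
  unfold kb
  rw [kneading_periodic_shift hq]

lemma cnt_window_const :
    ∀ a, cnt (fun r => kb T c (a + r)) (Nat.find hq + 1) =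
      cnt (kb T c) (Nat.find hq + 1) := by
  intro a
  induction a with
  | zero => exact cnt_congr (fun j _ => by rw [Nat.zero_add])
  | succ a ih =>
      rw [← ih]
      have h1 := cnt_shift_one (kb T c) a (Nat.find hq)
      have h2 := cnt_succ (fun r => kb T c ((a + 1) + r)) (Nat.find hq)
      rw [h2, h1]
      have h3 : kb T c (a + 1 + Nat.find hq) = kb T c a := by
        have e : a + 1 + Nat.find hq = a + (Nat.find hq + 1) := by ring
        rw [e]
        exact kb_periodic hq a
      rw [h3]
      ring

lemma Tc_hit_iff (m : ℕ) :
    T^[m] (T c) = c ↔ m % (Nat.find hq + 1) = Nat.find hq := by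
  constructor
  · intro h
    by_contra hne
    have hlt : m % (Nat.find hq + 1) < Nat.find hq := by
      have := Nat.mod_lt m (show 0 < Nat.find hq + 1 by omega)
      omega
    exact no_hit_before hq hlt (by rw [← iter_mod hq m]; exact h)
  · intro h
    rw [iter_mod hq m, h]
    exact hit_c hq

/-- core of the fold: a left neighbourhood of `T c` is mapped by `T^[f]` into the strict
`β`-side of `c`. -/
lemma fold_core (hT : IsUnimodal T c) : ∀ ε > 0, ∃ η > 0, ∀ w ∈ Icc (0:ℝ) 1,
    T c - η < w → w < T c →
    sideS c (kb T c (Nat.find hq)) (T^[Nat.find hq] w) ∧ |T^[Nat.find hq] w - c| < ε := by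
  intro ε hε
  obtain ⟨δ1, hδ1, hpers⟩ := orbit_persist hT (Nat.find hq) (Tc_mem01 hT)
  obtain ⟨δ2, hδ2, hcont⟩ := cont_at hT (Nat.find hq) (Tc_mem01 hT) ε hε
  refine ⟨min δ1 δ2, lt_min hδ1 hδ2, fun w hw hw1 hw2 => ?_⟩
  have hwd : |w - T c| < min δ1 δ2 := by
    rw [abs_of_neg (by linarith)]
    linarith
  have hnear : |T^[Nat.find hq] w - c| < ε := by
    have := hcont w hw (lt_of_lt_of_le hwd (min_le_right _ _))
    rwa [hit_c hq] at this
  refine ⟨?_, hnear⟩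
  have hsides : ∀ j < Nat.find hq,
      sideOK c (kb T c j) (T^[j] w) ∧ sideOK c (kb T c j) (T^[j] (T c)) := by
    intro j hj
    refine ⟨?_, knead_sideOK j⟩
    have hne := no_hit_before hq hj
    have hper := hpers w hw (lt_of_lt_of_le hwd (min_le_left _ _)) j hj
    cases hk : kb T c j
    · simp only [sideOK, if_false]
      have h0 := kb_false_iff.mp hk
      have := (knead_strict0 hne).mp h0
      exact (hper.1 this).le
    · simp only [sideOK, if_true]
      have h2 := kb_true_iff.mp hk
      have := (knead_strict2 hne).mp h2
      exact (hper.2 this).le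
  have hcmp := parity_mono hT (kb T c) (Nat.find hq) w (T c) hw (Tc_mem01 hT) hsides hw2
  by_cases he : Even (cnt (kb T c) (Nat.find hq))
  · have hkf : kb T c (Nat.find hq) = false := by
      apply kb_find_even hq
      rwa [← cnt_kb_eq_kappa hq]
    rw [hkf]
    simp only [sideS, if_false]
    have := hcmp.1 he
    rwa [hit_c hq] at this
  · have hkf : kb T c (Nat.find hq) = true := by
      apply kb_find_odd hq
      rwa [← cnt_kb_eq_kappa hq]
    rw [hkf]
    simp only [sideS, if_true]
    have := hcmp.2 (Nat.not_even_iff_odd.mp he)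
    rwa [hit_c hq] at this

lemma fold_step (hT : IsUnimodal T c) : ∀ ε > 0, ∃ η > 0, ∀ z ∈ Icc (0:ℝ) 1,
    z ≠ c → |z - c| < η →
    sideS c (kb T c (Nat.find hq)) (T^[Nat.find hq + 1] z) ∧
      |T^[Nat.find hq + 1] z - c| < ε := by
  intro ε hε
  obtain ⟨η1, hη1, hcore⟩ := fold_core hq hT ε hε
  obtain ⟨δ, hδ, hcont⟩ := cont_at hT 1 (c_mem01 hT) η1 hη1
  refine ⟨δ, hδ, fun z hz hzne hznear => ?_⟩
  have hTz : T z ∈ Icc (0:ℝ) 1 := uni_maps hT hz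
  have hTz2 : T z < T c := lt_Tc hT hz hzne
  have hTz1 : T c - η1 < T z := by
    have := hcont z hz hznear
    simp only [Function.iterate_one] at this
    have := abs_lt.mp this
    linarith [this.1]
  have e : T^[Nat.find hq + 1] z = T^[Nat.find hq] (T z) :=
    Function.iterate_succ_apply T (Nat.find hq) z
  rw [e]
  exact hcore (T z) hTz hTz1 hTz2

lemma fold_iter (hT : IsUnimodal T c) : ∀ (tmax : ℕ), ∀ ε > 0, ∃ η > 0,
    ∀ z ∈ Icc (0:ℝ) 1, z ≠ c → |z - c| < η →
    ∀ t, 1 ≤ t → t ≤ tmax →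
      sideS c (kb T c (Nat.find hq)) (T^[(Nat.find hq + 1) * t] z) ∧
        |T^[(Nat.find hq + 1) * t] z - c| < ε := by
  intro tmax
  induction tmax with
  | zero => exact fun ε hε => ⟨1, one_pos, fun z _ _ _ t ht1 ht0 => absurd (ht1.trans ht0) (by omega)⟩
  | succ tmax ih =>
      intro ε hε
      obtain ⟨η1, hη1, hiter⟩ := ih ε hε
      obtain ⟨η, hη, hstep⟩ := fold_step hq hT (min ε η1) (lt_min hε hη1)
      refine ⟨η, hη, fun z hz hzne hznear t ht1 ht2 => ?_⟩
      rcases Nat.lt_or_ge t 2 with ht | ht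
      · have : t = 1 := by omega
        subst this
        have := hstep z hz hzne hznear
        rw [Nat.mul_one]
        exact ⟨this.1, lt_of_lt_of_le this.2 (min_le_left _ _)⟩
      · obtain ⟨t', rfl⟩ : ∃ t', t = t' + 1 := ⟨t - 1, by omega⟩
        have hz1 := hstep z hz hzne hznear
        set z1 := T^[Nat.find hq + 1] z with hz1def
        have hz1mem : z1 ∈ Icc (0:ℝ) 1 := iter_mem01 hT hz (Nat.find hq + 1)
        have hz1ne : z1 ≠ c := sideS_ne hz1.1
        have hz1near : |z1 - c| < η1 := lt_of_lt_of_le hz1.2 (min_le_right _ _)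
        have e : T^[(Nat.find hq + 1) * (t' + 1)] z = T^[(Nat.find hq + 1) * t'] z1 := by
          rw [Nat.mul_succ, hz1def, ← Function.iterate_add_apply]
        rw [e]
        exact hiter z1 hz1mem hz1ne hz1near t' (by omega) (by omega)

end PeriodicFold

/-- Admissibility forces the symbol of `s` at a `*`-slot (i.e. a position preceded in
itinerary order by the full periodic context word) to be the chosen branch symbol `β`. -/
lemma slot_forced (hT : IsUnimodal T c) (hadm : AdmissibleLeft T c s)
    (hq : ∃ i, rawItin T c (T c) i = 1) {i0 : ℕ}
    (hctx : ∀ r < Nat.find hq, b2f (s (i0 + Nat.find hq - r)) = kneading T c r) :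
    b2f (s i0) = kneading T c (Nat.find hq) := by
  classical
  set f := Nat.find hq with hfdef
  obtain ⟨x, hx, p, hp⟩ := hadm (i0 + f + 1)
  have W1 : ∀ r < f, itin T c x (p + 1 + r) = kneading T c r := by
    intro r hr
    have h := hp (1 + r) (by omega)
    have e1 : i0 + f + 1 - (1 + r) = i0 + f - r := by omega
    have e2 : p + (1 + r) = p + 1 + r := by omega
    rw [e1, e2] at h
    rw [h]
    exact hctx r hr
  have W2 : itin T c x (p + f + 1) = b2f (s i0) := by
    have h := hp (f + 1) (by omega)
    have e1 : i0 + f + 1 - (f + 1) = i0 := by omega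
    have e2 : p + (f + 1) = p + f + 1 := by omega
    rw [e1, e2] at h
    exact h
  by_contra hne
  -- the "raw window" contradiction, used in two branches below
  have rawcase : ¬ (∀ r ≤ f, rawItin T c x (p + 1 + r) =
      (if r = f then b2f (s i0) else kneading T c r)) := by
    intro hraw
    set z := T^[p+1] x with hzdef
    have hz01 : z ∈ Icc (0:ℝ) 1 := iter_mem01 hT hx (p+1)
    have hzTc : z ≤ T c := by
      rw [hzdef, Function.iterate_succ_apply']
      exact le_Tc hT (iter_mem01 hT hx p)
    have hzit : ∀ r, T^[r] z = T^[p + 1 + r] x := by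
      intro r
      rw [hzdef, ← Function.iterate_add_apply]
      congr 1
      omega
    have hsides : ∀ j < f, sideOK c (kb T c j) (T^[j] z) ∧
        sideOK c (kb T c j) (T^[j] (T c)) := by
      intro j hj
      refine ⟨?_, knead_sideOK j⟩
      have hr := hraw j (by omega)
      rw [if_neg (by omega)] at hr
      rcases knead_or (T := T) (c := c) j with h0 | h2
      · have hr0 : rawItin T c x (p + 1 + j) = 0 := by rw [hr, h0]
        have hlt := raw_eq_zero_iff.mp hr0
        rw [kb_false_iff.mpr h0]
        simp only [sideOK, if_false]
        rw [hzit j]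
        exact hlt.le
      · have hr2 : rawItin T c x (p + 1 + j) = 2 := by rw [hr, h2]
        have hgt := raw_eq_two_iff.mp hr2
        rw [kb_true_iff.mpr h2]
        simp only [sideOK, if_true]
        rw [hzit j]
        exact hgt.le
    have hcmp := parity_mono_le hT (kb T c) f z (T c) hz01 (Tc_mem01 hT) hsides hzTc
    have hWf := hraw f le_rfl
    rw [if_pos rfl] at hWf
    by_cases he : Even (onesCount (rawItin T c (T c)) f)
    · -- kneading f = 0, so b2f (s i0) = 2
      have hkf : kneading T c f = 0 := by
        rw [knead_find_eq_betaF hq]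
        unfold betaF
        rw [if_pos he]
      have hb2 : b2f (s i0) = 2 := by
        cases hb : s i0
        · exfalso; apply hne; rw [hb, hkf]; rfl
        · rfl
      have : rawItin T c x (p + 1 + f) = 2 := by rw [hWf, hb2]
      have hgt := raw_eq_two_iff.mp this
      rw [← hzit f] at hgt
      have hle := hcmp.1 (by rwa [cnt_kb_eq_kappa hq])
      rw [hit_c hq] at hle
      linarith
    · have hkf : kneading T c f = 2 := by
        rw [knead_find_eq_betaF hq]
        unfold betaF
        rw [if_neg he]
      have hb2 : b2f (s i0) = 0 := by
        cases hb : s i0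
        · rfl
        · exfalso; apply hne; rw [hb, hkf]; rfl
      have : rawItin T c x (p + 1 + f) = 0 := by rw [hWf, hb2]
      have hlt := raw_eq_zero_iff.mp this
      rw [← hzit f] at hlt
      have hge := hcmp.2 (by rw [cnt_kb_eq_kappa hq]; exact Nat.not_even_iff_odd.mp he)
      rw [hit_c hq] at hge
      linarith
  unfold itin at W1 W2
  by_cases hhx : ∃ i, T^[i] x = c
  · rw [dif_pos hhx] at W1 W2
    set fx := Nat.find hhx with hfx
    by_cases hwin : p + 1 ≤ fx ∧ fx ≤ p + f + 1
    · -- the star would be inside the window: impossible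
      obtain ⟨hw1, hw2⟩ := hwin
      set r0 := fx - p - 1 with hr0
      rcases Nat.lt_or_ge r0 f with hr | hr
      · have := W1 r0 hr
        rw [if_neg (by omega), if_pos (by omega)] at this
        exact knead_ne_one r0 this.symm
      · have hr0f : r0 = f := by omega
        have := W2
        rw [if_neg (by omega), if_pos (by omega)] at this
        exact b2f_ne_one (s i0) this.symm
    · rcases Nat.lt_or_ge p fx with hfar | hνreg
      · -- raw region
        have hfar2 : p + f + 1 < fx := by omega
        apply rawcase
        intro r hr
        rcases Nat.lt_or_ge r f with h | h
        · have := W1 r h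
          rw [if_pos (by omega)] at this
          rw [if_neg (by omega)]
          exact this
        · have hrf : r = f := by omega
          subst hrf
          have := W2
          rw [if_pos (by omega)] at this
          rw [if_pos rfl]
          have e : p + 1 + f = p + f + 1 := by omega
          rw [e]
          exact this
      · -- ν region : counting contradiction
        set d := p - fx with hd
        have hdr : ∀ r ≤ f, kneading T c (d + r) =
            (if r = f then b2f (s i0) else kneading T c r) := by
          intro r hr
          rcases Nat.lt_or_ge r f with h | h
          · have := W1 r h
            rw [if_neg (by omega), if_neg (by omega)] at this
            have e : p + 1 + r - fx - 1 = d + r := by omega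
            rw [e] at this
            rw [if_neg (by omega)]
            exact this
          · have hrf : r = f := by omega
            subst hrf
            have := W2
            rw [if_neg (by omega), if_neg (by omega)] at this
            have e : p + f + 1 - fx - 1 = d + f := by omega
            rw [e] at this
            rw [if_pos rfl]
            exact this
        have hkbr : ∀ r < f, kb T c (d + r) = kb T c r := by
          intro r hr
          have := hdr r (by omega)
          rw [if_neg (by omega)] at this
          unfold kb
          rw [this]
        have hwincnt := cnt_window_const hq d
        rw [← hfdef] at hwincnt
        have h1 : cnt (fun r => kb T c (d + r)) (f + 1) =
            cnt (fun r => kb T c (d + r)) f + (if kb T c (d + f) then 1 else 0) :=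
          cnt_succ _ f
        have h2 : cnt (kb T c) (f + 1) = cnt (kb T c) f + (if kb T c f then 1 else 0) :=
          cnt_succ _ f
        have h3 : cnt (fun r => kb T c (d + r)) f = cnt (kb T c) f :=
          cnt_congr (fun j hj => hkbr j hj)
        have hite : (if kb T c (d + f) then 1 else 0) = (if kb T c f then (1:ℕ) else 0) := by
          omega
        have hkbeq : kb T c (d + f) = kb T c f := by
          cases hdk : kb T c (d + f) <;> cases hk : kb T c f <;>
            rw [hdk, hk] at hite <;> first | rfl | (exfalso; revert hite; norm_num)
        have hdf := hdr f le_rfl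
        rw [if_pos rfl] at hdf
        -- kneading (d+f) = b2f (s i0) ≠ kneading f, contradicting kb equality
        rcases knead_or (T := T) (c := c) f with h0 | h2
        · have hb2 : b2f (s i0) = 2 := by
            cases hb : s i0
            · exfalso; apply hne; rw [hb, h0]; rfl
            · rfl
          have : kb T c (d + f) = true := kb_true_iff.mpr (by rw [hdf, hb2])
          have hf' : kb T c f = false := kb_false_iff.mpr h0
          rw [this, hf'] at hkbeq
          exact Bool.noConfusion hkbeq
        · have hb2 : b2f (s i0) = 0 := by
            cases hb : s i0
            · rfl
            · exfalso; apply hne; rw [hb, h2]; rfl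
          have : kb T c (d + f) = false := kb_false_iff.mpr (by rw [hdf, hb2])
          have hf' : kb T c f = true := kb_true_iff.mpr h2
          rw [this, hf'] at hkbeq
          exact Bool.noConfusion hkbeq
  · rw [dif_neg hhx] at W1 W2
    apply rawcase
    intro r hr
    rcases Nat.lt_or_ge r f with h | h
    · rw [if_neg (by omega)]
      exact W1 r h
    · have hrf : r = f := by omega
      subst hrf
      rw [if_pos rfl]
      have e : p + 1 + f = p + f + 1 := by omega
      rw [e]
      exact W2

end Fold

section Nondeg

open Set

variable {T : ℝ → ℝ} {c : ℝ} {s : ℕ → Bool}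

lemma b2f_eq_knead_of_side {b : Bool} {v : ℝ} {r : ℕ} (hv : v = T^[r] (T c))
    (hside : sideOK c b v) (hne : v ≠ c) : b2f b = kneading T c r := by
  subst hv
  cases b
  · simp only [sideOK, if_false] at hside
    rw [(knead_strict0 hne).mpr (lt_of_le_of_ne hside hne)]
    rfl
  · simp only [sideOK, if_true] at hside
    rw [(knead_strict2 hne).mpr (lt_of_le_of_ne hside (Ne.symm hne))]
    rfl

/-- all cylinder conditions strictly after a first hit can be satisfied by any point
close enough to `c` (on either side). -/
lemma later_ok (hT : IsUnimodal T c) (hadm : AdmissibleLeft T c s)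
    {n : ℕ} {γ : ℝ} (hγ : γ ∈ Jset T c s n) {j0 : ℕ} (hj0 : j0 < n)
    (hhit : T^[j0] γ = c) :
    ∃ η > 0, ∀ z ∈ Icc (0:ℝ) 1, z ≠ c → |z - c| < η →
      ∀ j, j0 < j → j < n → sideOK c (s (n - 1 - j)) (T^[j - j0] z) := by
  have horb : ∀ j, j0 < j → j < n → T^[j] γ = T^[j - j0 - 1] (T c) :=
    fun j h1 _ => iter_shift hhit h1
  have hcval : ∀ d, 1 ≤ d → T^[d] c = T^[d - 1] (T c) := by
    intro d hd
    conv_lhs => rw [show d = (d - 1) + 1 by omega]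
    rw [Function.iterate_succ_apply]
  obtain ⟨δp, hδp, hpers⟩ := orbit_persist hT (n - j0) (c_mem01 hT)
  by_cases hq : ∃ i, rawItin T c (T c) i = 1
  · -- periodic case: use the fold for the *-slots
    obtain ⟨ηf, hηf, hfold⟩ := fold_iter hq hT n 1 one_pos
    refine ⟨min δp ηf, lt_min hδp hηf, fun z hz hzne hznear j hj1 hj2 => ?_⟩
    set m := j - j0 - 1 with hm
    have hjm : j = j0 + m + 1 := by omega
    have hd : j - j0 = m + 1 := by omega
    by_cases hslot : m % (Nat.find hq + 1) = Nat.find hq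
    · -- slot: s-value is forced to β and the fold lands there
      -- forced requirement
      have hctx : ∀ r < Nat.find hq,
          b2f (s ((n - 1 - j) + Nat.find hq - r)) = kneading T c r := by
        intro r hr
        have hmf : Nat.find hq ≤ m := by
          have := Nat.mod_le m (Nat.find hq + 1)
          omega
        set ℓ := j - Nat.find hq + r with hℓ
        have hℓj0 : j0 < ℓ := by omega
        have hℓn : ℓ < n := by omega
        have hval : T^[ℓ] γ = T^[ℓ - j0 - 1] (T c) := horb ℓ hℓj0 hℓn
        have hm' : ℓ - j0 - 1 = m - Nat.find hq + r := by omega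
        have hmodm' : (m - Nat.find hq + r) % (Nat.find hq + 1) = r := by
          obtain ⟨a, ha⟩ : ∃ a, m = (Nat.find hq + 1) * a + Nat.find hq :=
            ⟨m / (Nat.find hq + 1), by
              conv_lhs => rw [← Nat.div_add_mod m (Nat.find hq + 1)]
              rw [hslot]⟩
          have : m - Nat.find hq + r = (Nat.find hq + 1) * a + r := by omega
          rw [this, Nat.mul_add_mod]
          exact Nat.mod_eq_of_lt (by omega)
        have hvmod : T^[ℓ - j0 - 1] (T c) = T^[r] (T c) := by
          rw [hm', iter_mod hq (m - Nat.find hq + r), hmodm']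
        have hvne : T^[ℓ] γ ≠ c := by
          rw [hval, hvmod]
          exact no_hit_before hq hr
        have hside := hγ.2 ℓ hℓn
        have hidx : (n - 1 - j) + Nat.find hq - r = n - 1 - ℓ := by omega
        rw [hidx]
        have := b2f_eq_knead_of_side (by rw [hval, hvmod] : T^[ℓ] γ = T^[r] (T c))
          hside hvne
        rw [this, knead_eq_raw_below hq hr, ← knead_eq_raw_below hq hr]
      have hforced := slot_forced hT hadm hq hctx
      have hbool : s (n - 1 - j) = kb T c (Nat.find hq) :=
        (b2f_knead_sideOK hforced).symm
      -- fold
      obtain ⟨a, ha⟩ : ∃ a, m = (Nat.find hq + 1) * a + Nat.find hq :=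
        ⟨m / (Nat.find hq + 1), by
          conv_lhs => rw [← Nat.div_add_mod m (Nat.find hq + 1)]
          rw [hslot]⟩
      have hdq : j - j0 = (Nat.find hq + 1) * (a + 1) := by
        rw [Nat.mul_succ]
        omega
      have hf := hfold z hz hzne (lt_of_lt_of_le hznear (min_le_right _ _))
        (a + 1) (by omega) (by
          have h1 : a + 1 ≤ (Nat.find hq + 1) * (a + 1) :=
            Nat.le_mul_of_pos_left _ (by omega)
          omega)
      rw [hdq, hbool]
      exact (hf.1).ok
    · -- non-slot: strict side persists from the orbit of c
      have hd1 : 1 ≤ j - j0 := by omega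
      have hcv : T^[j - j0] c = T^[m] (T c) := by
        rw [hcval (j - j0) hd1]
      have hvne : T^[m] (T c) ≠ c := fun h => hslot ((Tc_hit_iff hq m).mp h)
      have hγval : T^[j] γ = T^[m] (T c) := by
        rw [horb j hj1 hj2]
      have hside := hγ.2 j hj2
      rw [hγval] at hside
      have hper := hpers z hz (lt_of_lt_of_le hznear (min_le_left _ _)) (j - j0) (by omega)
      rw [hcv] at hper
      cases hb : s (n - 1 - j)
      · rw [hb] at hside
        simp only [sideOK, if_false] at hside ⊢
        exact (hper.1 (lt_of_le_of_ne hside hvne)).le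
      · rw [hb] at hside
        simp only [sideOK, if_true] at hside ⊢
        exact (hper.2 (lt_of_le_of_ne hside (Ne.symm hvne))).le
  · -- aperiodic case: no further hits at all, all sides strict
    refine ⟨δp, hδp, fun z hz hzne hznear j hj1 hj2 => ?_⟩
    set m := j - j0 - 1 with hm
    have hd1 : 1 ≤ j - j0 := by omega
    have hcv : T^[j - j0] c = T^[m] (T c) := by
      rw [hcval (j - j0) hd1]
    have hvne : T^[m] (T c) ≠ c := by
      intro h
      exact hq ⟨m, raw_eq_one_iff.mpr h⟩
    have hγval : T^[j] γ = T^[m] (T c) := by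
      rw [iter_shift hhit hj1]
    have hside := hγ.2 j hj2
    rw [hγval] at hside
    have hper := hpers z hz hznear (j - j0) (by omega)
    rw [hcv] at hper
    cases hb : s (n - 1 - j)
    · rw [hb] at hside
      simp only [sideOK, if_false] at hside ⊢
      exact (hper.1 (lt_of_le_of_ne hside hvne)).le
    · rw [hb] at hside
      simp only [sideOK, if_true] at hside ⊢
      exact (hper.2 (lt_of_le_of_ne hside (Ne.symm hvne))).le

end Nondeg

section Nondeg2

open Set

variable {T : ℝ → ℝ} {c : ℝ} {s : ℕ → Bool}

/-- at `γ = T c` the slot symbol and the prefix symbols are forced to be the kneading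
symbols. -/
lemma sigma_forced_at_Tc (hT : IsUnimodal T c) (hadm : AdmissibleLeft T c s)
    {n j0 : ℕ} (hγTc : T c ∈ Jset T c s n) (hj0 : j0 < n)
    (hhit : T^[j0] (T c) = c) (hmin : ∀ j < j0, T^[j] (T c) ≠ c) :
    s (n - 1 - j0) = kb T c j0 ∧ ∀ j < j0, s (n - 1 - j) = kb T c j := by
  have hq : ∃ i, rawItin T c (T c) i = 1 := ⟨j0, raw_eq_one_iff.mpr hhit⟩
  have hfle : Nat.find hq ≤ j0 := Nat.find_min' hq (raw_eq_one_iff.mpr hhit)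
  have hfeq : Nat.find hq = j0 := by
    rcases lt_or_eq_of_le hfle with h | h
    · exact absurd (hit_c hq) (hmin _ h)
    · exact h
  have hctx0 : ∀ j < j0, b2f (s (n - 1 - j)) = kneading T c j := by
    intro j hjlt
    exact b2f_eq_knead_of_side rfl (hγTc.2 j (by omega)) (hmin j hjlt)
  constructor
  · have hctx : ∀ r < Nat.find hq,
        b2f (s ((n - 1 - j0) + Nat.find hq - r)) = kneading T c r := by
      intro r hr
      rw [hfeq] at hr ⊢
      have e : (n - 1 - j0) + j0 - r = n - 1 - r := by omega
      rw [e]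
      exact hctx0 r hr
    have := slot_forced hT hadm hq hctx
    rw [hfeq] at this
    exact (b2f_knead_sideOK this).symm
  · intro j hjlt
    exact (b2f_knead_sideOK (hctx0 j hjlt)).symm

/-- main nondegeneracy lemma: a cylinder containing a point whose orbit hits `c`
contains at least two points. -/
lemma J_nondeg_of_hit (hT : IsUnimodal T c) (hadm : AdmissibleLeft T c s)
    {n : ℕ} {γ : ℝ} (hγ : γ ∈ Jset T c s n) {j0 : ℕ} (hj0 : j0 < n)
    (hhit : T^[j0] γ = c) (hmin : ∀ j < j0, T^[j] γ ≠ c) :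
    ∃ y ∈ Jset T c s n, y ≠ γ := by
  have hγ01 : γ ∈ Icc (0:ℝ) 1 := Jset_sub01 hT n hγ
  have hγpos : 0 < γ := by
    rcases lt_or_eq_of_le hγ.1.1 with h | h
    · exact h
    · exfalso
      rw [← h, iter_zero hT j0] at hhit
      exact absurd hhit.symm (ne_of_gt (uni_c0 hT))
  obtain ⟨η, hη, hlater⟩ := later_ok hT hadm hγ hj0 hhit
  obtain ⟨δ1, hδ1, hpers⟩ := orbit_persist hT j0 hγ01
  obtain ⟨δ2, hδ2, hcont⟩ := cont_at hT j0 hγ01 η hη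
  set δ := min δ1 δ2 with hδdef
  have hδ : 0 < δ := lt_min hδ1 hδ2
  have build : ∀ w, w ∈ Icc 0 (T c) → w ≠ γ → |w - γ| < δ →
      sideS c (s (n - 1 - j0)) (T^[j0] w) → ∃ y ∈ Jset T c s n, y ≠ γ := by
    intro w hwTc hwne hwδ hwside
    refine ⟨w, ⟨hwTc, ?_⟩, hwne⟩
    have hw01 : w ∈ Icc (0:ℝ) 1 := ⟨hwTc.1, hwTc.2.trans (Tc_mem01 hT).2⟩
    intro j hjn
    rcases Nat.lt_trichotomy j j0 with h | h | h
    · have hper := hpers w hw01 (lt_of_lt_of_le hwδ (min_le_left _ _)) j h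
      have hside := hγ.2 j hjn
      have hne := hmin j h
      cases hb : s (n - 1 - j)
      · rw [hb] at hside
        simp only [sideOK, if_false] at hside ⊢
        exact (hper.1 (lt_of_le_of_ne hside hne)).le
      · rw [hb] at hside
        simp only [sideOK, if_true] at hside ⊢
        exact (hper.2 (lt_of_le_of_ne hside (Ne.symm hne))).le
    · subst h
      exact hwside.ok
    · have hz01 : T^[j0] w ∈ Icc (0:ℝ) 1 := iter_mem01 hT hw01 j0
      have hzne : T^[j0] w ≠ c := sideS_ne hwside
      have hznear : |T^[j0] w - c| < η := by
        have := hcont w hw01 (lt_of_lt_of_le hwδ (min_le_right _ _))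
        rwa [hhit] at this
      have hl := hlater (T^[j0] w) hz01 hzne hznear j h hjn
      have e : T^[j - j0] (T^[j0] w) = T^[j] w := by
        rw [← Function.iterate_add_apply]
        congr 1
        omega
      rwa [e] at hl
  -- side conditions for `parity_mono` around `γ`
  have hsides : ∀ w ∈ Icc (0:ℝ) 1, |w - γ| < δ → ∀ j < j0,
      sideOK c (s (n - 1 - j)) (T^[j] w) ∧ sideOK c (s (n - 1 - j)) (T^[j] γ) := by
    intro w hw hwδ j hjlt
    refine ⟨?_, hγ.2 j (by omega)⟩
    have hper := hpers w hw (lt_of_lt_of_le hwδ (min_le_left _ _)) j hjlt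
    have hside := hγ.2 j (by omega)
    have hne := hmin j hjlt
    cases hb : s (n - 1 - j)
    · rw [hb] at hside
      simp only [sideOK, if_false] at hside ⊢
      exact (hper.1 (lt_of_le_of_ne hside hne)).le
    · rw [hb] at hside
      simp only [sideOK, if_true] at hside ⊢
      exact (hper.2 (lt_of_le_of_ne hside (Ne.symm hne))).le
  set F : ℕ → Bool := fun j => s (n - 1 - j) with hF
  set p0 := cnt F j0 with hp0
  by_cases hdir : (Even p0 ∧ s (n - 1 - j0) = true) ∨ (¬ Even p0 ∧ s (n - 1 - j0) = false)
  · -- need a right perturbation; possible since γ < T c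
    have hγTc : γ < T c := by
      rcases lt_or_eq_of_le hγ.1.2 with h | h
      · exact h
      · exfalso
        subst h
        obtain ⟨hσ, hpre⟩ := sigma_forced_at_Tc hT hadm hγ hj0 hhit hmin
        have hq : ∃ i, rawItin T c (T c) i = 1 := ⟨j0, raw_eq_one_iff.mpr hhit⟩
        have hfeq : Nat.find hq = j0 := by
          rcases lt_or_eq_of_le (Nat.find_min' hq (raw_eq_one_iff.mpr hhit)) with h | h
          · exact absurd (hit_c hq) (hmin _ h)
          · exact h
        have hp0kb : p0 = cnt (kb T c) j0 := by
          rw [hp0]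
          exact cnt_congr (fun j hj => hpre j hj)
        rcases hdir with ⟨hev, hσt⟩ | ⟨hodd, hσf⟩
        · have : kb T c j0 = false := by
            rw [← hfeq]
            apply kb_find_even hq
            rw [← cnt_kb_eq_kappa hq, hfeq, ← hp0kb]
            exact hev
          rw [hσ, this] at hσt
          exact Bool.noConfusion hσt
        · have : kb T c j0 = true := by
            rw [← hfeq]
            apply kb_find_odd hq
            rw [← cnt_kb_eq_kappa hq, hfeq, ← hp0kb]
            exact hodd
          rw [hσ, this] at hσf
          exact Bool.noConfusion hσf
    set d := min (δ/2) ((T c - γ)/2) with hd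
    have hdpos : 0 < d := by
      apply lt_min
      · linarith
      · linarith
    set w := γ + d with hw
    have hwTc : w ∈ Icc 0 (T c) := by
      constructor
      · have : (0:ℝ) ≤ γ := hγ.1.1
        rw [hw]; linarith
      · rw [hw]
        have : d ≤ (T c - γ)/2 := min_le_right _ _
        linarith
    have hw01 : w ∈ Icc (0:ℝ) 1 := ⟨hwTc.1, hwTc.2.trans (Tc_mem01 hT).2⟩
    have hwδ : |w - γ| < δ := by
      rw [hw]
      rw [show γ + d - γ = d by ring, abs_of_pos hdpos]
      have : d ≤ δ/2 := min_le_left _ _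
      linarith
    have hcmp := parity_mono hT F j0 γ w hγ01 hw01
      (fun j hj => ⟨(hsides w hw01 hwδ j hj).2, (hsides w hw01 hwδ j hj).1⟩)
      (by rw [hw]; linarith)
    apply build w hwTc (by rw [hw]; intro hh; nlinarith [hdpos]) hwδ
    rcases hdir with ⟨hev, hσt⟩ | ⟨hodd, hσf⟩
    · rw [hσt]
      simp only [sideS, if_true]
      have := hcmp.1 hev
      rwa [hhit] at this
    · rw [hσf]
      simp only [sideS, if_false]
      have := hcmp.2 (Nat.not_even_iff_odd.mp hodd)
      rwa [hhit] at this
  · -- left perturbation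
    set d := min (δ/2) (γ/2) with hd
    have hdpos : 0 < d := by
      apply lt_min
      · linarith
      · linarith
    set w := γ - d with hw
    have hwTc : w ∈ Icc 0 (T c) := by
      constructor
      · rw [hw]
        have : d ≤ γ/2 := min_le_right _ _
        linarith
      · rw [hw]
        have : γ ≤ T c := hγ.1.2
        linarith
    have hw01 : w ∈ Icc (0:ℝ) 1 := ⟨hwTc.1, hwTc.2.trans (Tc_mem01 hT).2⟩
    have hwδ : |w - γ| < δ := by
      rw [hw, show γ - d - γ = -d by ring, abs_neg, abs_of_pos hdpos]
      have : d ≤ δ/2 := min_le_left _ _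
      linarith
    have hcmp := parity_mono hT F j0 w γ hw01 hγ01
      (fun j hj => hsides w hw01 hwδ j hj)
      (by rw [hw]; linarith)
    apply build w hwTc (by rw [hw]; intro hh; nlinarith [hdpos]) hwδ
    push_neg at hdir
    by_cases hev : Even p0
    · have hσf : s (n - 1 - j0) = false := by
        cases hb : s (n - 1 - j0)
        · rfl
        · exact absurd hb (hdir.1 hev)
      rw [hσf]
      simp only [sideS, if_false]
      have := hcmp.1 hev
      rwa [hhit] at this
    · have hσt : s (n - 1 - j0) = true := by
        cases hb : s (n - 1 - j0)
        · exact absurd hb (hdir.2 hev)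
        · rfl
      rw [hσt]
      simp only [sideS, if_true]
      have := hcmp.2 (Nat.not_even_iff_odd.mp hev)
      rwa [hhit] at this

end Nondeg2

section Witness

open Set

variable {T : ℝ → ℝ} {c : ℝ} {s : ℕ → Bool}

lemma J_parity_mono_le (hT : IsUnimodal T c) {n : ℕ} {a b : ℝ}
    (ha : a ∈ Jset T c s n) (hb : b ∈ Jset T c s n) (hab : a ≤ b) :
    (Even (cnt s n) → T^[n] a ≤ T^[n] b) ∧ (Odd (cnt s n) → T^[n] b ≤ T^[n] a) := by
  rcases eq_or_lt_of_le hab with h | h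
  · subst h; exact ⟨fun _ => le_rfl, fun _ => le_rfl⟩
  · have := J_parity_mono hT ha hb h
    exact ⟨fun he => (this.1 he).le, fun ho => (this.2 ho).le⟩

lemma J_perturb_nohit (hT : IsUnimodal T c) {n : ℕ} {γ : ℝ} (hγ : γ ∈ Jset T c s n)
    (hnohit : ∀ j < n, T^[j] γ ≠ c) :
    ∃ δ > 0, ∀ w ∈ Icc 0 (T c), |w - γ| < δ → w ∈ Jset T c s n := by
  have hγ01 : γ ∈ Icc (0:ℝ) 1 := Jset_sub01 hT n hγ
  obtain ⟨δ, hδ, hpers⟩ := orbit_persist hT n hγ01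
  refine ⟨δ, hδ, fun w hwTc hwδ => ?_⟩
  have hw01 : w ∈ Icc (0:ℝ) 1 := ⟨hwTc.1, hwTc.2.trans (Tc_mem01 hT).2⟩
  refine ⟨hwTc, fun j hj => ?_⟩
  have hper := hpers w hw01 hwδ j hj
  have hside := hγ.2 j hj
  have hne := hnohit j hj
  cases hb : s (n - 1 - j)
  · rw [hb] at hside
    simp only [sideOK, if_false] at hside ⊢
    exact (hper.1 (lt_of_le_of_ne hside hne)).le
  · rw [hb] at hside
    simp only [sideOK, if_true] at hside ⊢
    exact (hper.2 (lt_of_le_of_ne hside (Ne.symm hne))).le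

lemma exists_even_witness (hT : IsUnimodal T c) (hadm : AdmissibleLeft T c s) (n : ℕ) :
    ∃ mm, 1 ≤ mm ∧ PrefixMatch T c s mm ∧ Even (kneadOnes T c (mm - 1)) ∧
      T^[mm] c = sSup (Pset T c s n) := by
  classical
  have hJne := Jset_nonempty hT hadm n
  have hJcp := Jset_compact (s := s) hT n
  obtain ⟨γ, hγJ, hmax⟩ : ∃ γ ∈ Jset T c s n, ∀ z ∈ Jset T c s n, T^[n] z ≤ T^[n] γ := by
    by_cases hev : Even (cnt s n)
    · exact ⟨sSup _, hJcp.sSup_mem hJne, fun z hz =>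
        (J_parity_mono_le hT hz (hJcp.sSup_mem hJne) (le_csSup hJcp.bddAbove hz)).1 hev⟩
    · exact ⟨sInf _, hJcp.sInf_mem hJne, fun z hz =>
        (J_parity_mono_le hT (hJcp.sInf_mem hJne) hz (csInf_le hJcp.bddBelow hz)).2
          (Nat.not_even_iff_odd.mp hev)⟩
  have hPsup : sSup (Pset T c s n) = T^[n] γ := by
    apply le_antisymm
    · apply csSup_le ((Jset_nonempty hT hadm n).image _)
      rintro y ⟨z, hz, rfl⟩
      exact hmax z hz
    · exact le_csSup (Pset_compact hT n).bddAbove ⟨γ, hγJ, rfl⟩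
  rw [hPsup]
  by_cases hhits : ∃ j, j < n ∧ T^[j] γ = c
  · obtain ⟨j1, hj1n, hj1⟩ := hhits
    set P : ℕ → Prop := fun j => T^[j] γ = c with hP
    set jM := Nat.findGreatest P (n - 1) with hjM
    have hjMspec : P jM := Nat.findGreatest_spec (m := j1) (by omega) hj1
    have hjMlt : jM < n := by
      have := Nat.findGreatest_le (P := P) (n - 1)
      omega
    have hjMmax : ∀ j', jM < j' → j' < n → T^[j'] γ ≠ c := by
      intro j' h1 h2
      exact Nat.findGreatest_is_greatest h1 (by omega)
    obtain ⟨hpm, hval⟩ := match_of_hit hT hγJ hjMlt hjMspec hjMmax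
    by_cases hevk : Even (kneadOnes T c (n - jM - 1))
    · refine ⟨n - jM, by omega, hpm, ?_, hval.symm⟩
      have e : n - jM - 1 = (n - jM) - 1 := by omega
      rwa [← e]
    · exfalso
      have hoddk := Nat.not_even_iff_odd.mp hevk
      have hall : ∀ z ∈ Jset T c s n, T^[n] z = T^[n] γ := by
        intro z hz
        have := (hit_compare hT hγJ hz hjMlt hjMspec hjMmax).2 hoddk
        exact le_antisymm (hmax z hz) this
      have hsingle : ∀ z ∈ Jset T c s n, z = γ := by
        intro z hz
        by_contra hne
        rcases lt_or_gt_of_ne hne with h | h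
        · have hmono := J_parity_mono hT hz hγJ h
          rcases Nat.even_or_odd (cnt s n) with he | ho
          · have := hmono.1 he
            rw [hall z hz] at this
            exact lt_irrefl _ this
          · have := hmono.2 ho
            rw [hall z hz] at this
            exact lt_irrefl _ this
        · have hmono := J_parity_mono hT hγJ hz h
          rcases Nat.even_or_odd (cnt s n) with he | ho
          · have := hmono.1 he
            rw [hall z hz] at this
            exact lt_irrefl _ this
          · have := hmono.2 ho
            rw [hall z hz] at this
            exact lt_irrefl _ this
      have hex : ∃ j, T^[j] γ = c := ⟨jM, hjMspec⟩
      have hfind_lt : Nat.find hex < n := by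
        have := Nat.find_min' hex hjMspec
        omega
      obtain ⟨y, hyJ, hyne⟩ := J_nondeg_of_hit hT hadm hγJ hfind_lt
        (Nat.find_spec hex) (fun j hj => Nat.find_min hex hj)
      exact hyne (hsingle y hyJ)
  · push_neg at hhits
    by_cases hγTc : γ = T c
    · subst hγTc
      obtain ⟨hpm, hcnt, hval⟩ := match_Tc hT hγJ hhits
      have hevn : Even (cnt s n) := by
        by_contra hodd'
        -- then γ = sInf J = T c, so J = {T c}; but we can perturb left
        have hodd := Nat.not_even_iff_odd.mp hodd'
        obtain ⟨δ, hδ, hpert⟩ := J_perturb_nohit hT hγJ hhits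
        have hTcpos := Tc_pos hT
        set w := T c - min (δ/2) (T c / 2) with hw
        have hwmem : w ∈ Jset T c s n := by
          apply hpert
          · constructor
            · rw [hw]
              have : min (δ/2) (T c/2) ≤ T c/2 := min_le_right _ _
              linarith
            · rw [hw]
              have : (0:ℝ) < min (δ/2) (T c/2) := lt_min (by linarith) (by linarith)
              linarith
          · rw [hw, show T c - min (δ/2) (T c/2) - T c = -(min (δ/2) (T c/2)) by ring,
              abs_neg, abs_of_pos (lt_min (by linarith) (by linarith))]
            have : min (δ/2) (T c/2) ≤ δ/2 := min_le_left _ _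
            linarith
        -- γ is the argmax; with odd parity the argmax is sInf J, so w ≥ γ = T c
        -- but w < T c, and also T^[n] w ≤ T^[n] γ with strict monotonicity gives
        -- a contradiction via hmax and hall-type argument
        have hwlt : w < T c := by
          rw [hw]
          have : (0:ℝ) < min (δ/2) (T c/2) := lt_min (by linarith) (by linarith)
          linarith
        have := (J_parity_mono hT hwmem hγJ hwlt).2 hodd
        exact lt_irrefl _ (lt_of_le_of_lt (hmax w hwmem) this)
      refine ⟨n + 1, by omega, hpm, ?_, hval⟩
      have e : n + 1 - 1 = n := by omega
      rw [e, hcnt]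
      exact hevn
    · exfalso
      -- interior or 0 : both contradict maximality
      by_cases hγ0 : γ = 0
      · subst hγ0
        obtain ⟨hfalse, y, hyJ, hypos⟩ := zero_mem_J hT hγJ
        have hcnt0 : cnt s n = 0 := by
          rw [← cnt_rev s n]
          unfold cnt
          rw [Finset.card_eq_zero, Finset.filter_eq_empty_iff]
          intro j hj
          rw [Finset.mem_range] at hj
          show ¬ (s (n - 1 - j) = true)
          rw [hfalse j hj]
          exact Bool.noConfusion
        have := (J_parity_mono hT hγJ hyJ hypos).1 (by rw [hcnt0]; exact Even.zero)
        exact lt_irrefl _ (lt_of_le_of_lt (hmax y hyJ) this)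
      · have hγpos : 0 < γ := lt_of_le_of_ne hγJ.1.1 (Ne.symm hγ0)
        have hγltTc : γ < T c := lt_of_le_of_ne hγJ.1.2 hγTc
        obtain ⟨δ, hδ, hpert⟩ := J_perturb_nohit hT hγJ hhits
        rcases Nat.even_or_odd (cnt s n) with he | ho
        · set w := γ + min (δ/2) ((T c - γ)/2) with hw
          have hmpos : (0:ℝ) < min (δ/2) ((T c - γ)/2) := lt_min (by linarith) (by linarith)
          have hwmem : w ∈ Jset T c s n := by
            apply hpert
            · constructor
              · rw [hw]; linarith [hγJ.1.1]
              · rw [hw]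
                have : min (δ/2) ((T c - γ)/2) ≤ (T c - γ)/2 := min_le_right _ _
                linarith
            · rw [hw, show γ + min (δ/2) ((T c - γ)/2) - γ = min (δ/2) ((T c - γ)/2) by ring,
                abs_of_pos hmpos]
              have : min (δ/2) ((T c - γ)/2) ≤ δ/2 := min_le_left _ _
              linarith
          have hwgt : γ < w := by rw [hw]; linarith
          have := (J_parity_mono hT hγJ hwmem hwgt).1 he
          exact lt_irrefl _ (lt_of_le_of_lt (hmax w hwmem) this)
        · set w := γ - min (δ/2) (γ/2) with hw
          have hmpos : (0:ℝ) < min (δ/2) (γ/2) := lt_min (by linarith) (by linarith)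
          have hwmem : w ∈ Jset T c s n := by
            apply hpert
            · constructor
              · rw [hw]
                have : min (δ/2) (γ/2) ≤ γ/2 := min_le_right _ _
                linarith
              · rw [hw]; linarith [hγJ.1.2]
            · rw [hw, show γ - min (δ/2) (γ/2) - γ = -(min (δ/2) (γ/2)) by ring,
                abs_neg, abs_of_pos hmpos]
              have : min (δ/2) (γ/2) ≤ δ/2 := min_le_left _ _
              linarith
          have hwlt : w < γ := by rw [hw]; linarith
          have := (J_parity_mono hT hwmem hγJ hwlt).2 ho
          exact lt_irrefl _ (lt_of_le_of_lt (hmax w hwmem) this)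

lemma exists_odd_witness (hT : IsUnimodal T c) (hadm : AdmissibleLeft T c s) (n : ℕ) :
    (∃ mm, 1 ≤ mm ∧ PrefixMatch T c s mm ∧ Odd (kneadOnes T c (mm - 1)) ∧
      T^[mm] c = sInf (Pset T c s n)) ∨ sInf (Pset T c s n) = 0 := by
  classical
  have hJne := Jset_nonempty hT hadm n
  have hJcp := Jset_compact (s := s) hT n
  obtain ⟨γ, hγJ, hmin'⟩ : ∃ γ ∈ Jset T c s n, ∀ z ∈ Jset T c s n, T^[n] γ ≤ T^[n] z := by
    by_cases hev : Even (cnt s n)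
    · exact ⟨sInf _, hJcp.sInf_mem hJne, fun z hz =>
        (J_parity_mono_le hT (hJcp.sInf_mem hJne) hz (csInf_le hJcp.bddBelow hz)).1 hev⟩
    · exact ⟨sSup _, hJcp.sSup_mem hJne, fun z hz =>
        (J_parity_mono_le hT hz (hJcp.sSup_mem hJne) (le_csSup hJcp.bddAbove hz)).2
          (Nat.not_even_iff_odd.mp hev)⟩
  have hPinf : sInf (Pset T c s n) = T^[n] γ := by
    apply le_antisymm
    · exact csInf_le (Pset_compact hT n).bddBelow ⟨γ, hγJ, rfl⟩
    · apply le_csInf ((Jset_nonempty hT hadm n).image _)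
      rintro y ⟨z, hz, rfl⟩
      exact hmin' z hz
  rw [hPinf]
  by_cases hhits : ∃ j, j < n ∧ T^[j] γ = c
  · obtain ⟨j1, hj1n, hj1⟩ := hhits
    set P : ℕ → Prop := fun j => T^[j] γ = c with hP
    set jM := Nat.findGreatest P (n - 1) with hjM
    have hjMspec : P jM := Nat.findGreatest_spec (m := j1) (by omega) hj1
    have hjMlt : jM < n := by
      have := Nat.findGreatest_le (P := P) (n - 1)
      omega
    have hjMmax : ∀ j', jM < j' → j' < n → T^[j'] γ ≠ c := by
      intro j' h1 h2
      exact Nat.findGreatest_is_greatest h1 (by omega)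
    obtain ⟨hpm, hval⟩ := match_of_hit hT hγJ hjMlt hjMspec hjMmax
    by_cases hoddk : Odd (kneadOnes T c (n - jM - 1))
    · left
      refine ⟨n - jM, by omega, hpm, ?_, hval.symm⟩
      have e : n - jM - 1 = (n - jM) - 1 := by omega
      rwa [← e]
    · exfalso
      have hevk := Nat.not_odd_iff_even.mp hoddk
      have hall : ∀ z ∈ Jset T c s n, T^[n] z = T^[n] γ := by
        intro z hz
        have := (hit_compare hT hγJ hz hjMlt hjMspec hjMmax).1 hevk
        exact le_antisymm this (hmin' z hz)
      have hsingle : ∀ z ∈ Jset T c s n, z = γ := by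
        intro z hz
        by_contra hne
        rcases lt_or_gt_of_ne hne with h | h
        · have hmono := J_parity_mono hT hz hγJ h
          rcases Nat.even_or_odd (cnt s n) with he | ho
          · have := hmono.1 he
            rw [hall z hz] at this
            exact lt_irrefl _ this
          · have := hmono.2 ho
            rw [hall z hz] at this
            exact lt_irrefl _ this
        · have hmono := J_parity_mono hT hγJ hz h
          rcases Nat.even_or_odd (cnt s n) with he | ho
          · have := hmono.1 he
            rw [hall z hz] at this
            exact lt_irrefl _ this
          · have := hmono.2 ho
            rw [hall z hz] at this
            exact lt_irrefl _ this
      have hex : ∃ j, T^[j] γ = c := ⟨jM, hjMspec⟩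
      have hfind_lt : Nat.find hex < n := by
        have := Nat.find_min' hex hjMspec
        omega
      obtain ⟨y, hyJ, hyne⟩ := J_nondeg_of_hit hT hadm hγJ hfind_lt
        (Nat.find_spec hex) (fun j hj => Nat.find_min hex hj)
      exact hyne (hsingle y hyJ)
  · push_neg at hhits
    by_cases hγ0 : γ = 0
    · right
      rw [hγ0, iter_zero hT n]
    · by_cases hγTc : γ = T c
      · subst hγTc
        obtain ⟨hpm, hcnt, hval⟩ := match_Tc hT hγJ hhits
        have hoddn : Odd (cnt s n) := by
          by_contra hev'
          have hev := Nat.not_odd_iff_even.mp hev'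
          obtain ⟨δ, hδ, hpert⟩ := J_perturb_nohit hT hγJ hhits
          have hTcpos := Tc_pos hT
          set w := T c - min (δ/2) (T c / 2) with hw
          have hmpos : (0:ℝ) < min (δ/2) (T c/2) := lt_min (by linarith) (by linarith)
          have hwmem : w ∈ Jset T c s n := by
            apply hpert
            · constructor
              · rw [hw]
                have : min (δ/2) (T c/2) ≤ T c/2 := min_le_right _ _
                linarith
              · rw [hw]; linarith
            · rw [hw, show T c - min (δ/2) (T c/2) - T c = -(min (δ/2) (T c/2)) by ring,
                abs_neg, abs_of_pos hmpos]
              have : min (δ/2) (T c/2) ≤ δ/2 := min_le_left _ _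
              linarith
          have hwlt : w < T c := by rw [hw]; linarith
          have := (J_parity_mono hT hwmem hγJ hwlt).1 hev
          exact lt_irrefl _ (lt_of_lt_of_le this (hmin' w hwmem))
        left
        refine ⟨n + 1, by omega, hpm, ?_, hval⟩
        have e : n + 1 - 1 = n := by omega
        rw [e, hcnt]
        exact hoddn
      · exfalso
        have hγpos : 0 < γ := lt_of_le_of_ne hγJ.1.1 (Ne.symm hγ0)
        have hγltTc : γ < T c := lt_of_le_of_ne hγJ.1.2 hγTc
        obtain ⟨δ, hδ, hpert⟩ := J_perturb_nohit hT hγJ hhits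
        rcases Nat.even_or_odd (cnt s n) with he | ho
        · set w := γ - min (δ/2) (γ/2) with hw
          have hmpos : (0:ℝ) < min (δ/2) (γ/2) := lt_min (by linarith) (by linarith)
          have hwmem : w ∈ Jset T c s n := by
            apply hpert
            · constructor
              · rw [hw]
                have : min (δ/2) (γ/2) ≤ γ/2 := min_le_right _ _
                linarith
              · rw [hw]; linarith [hγJ.1.2]
            · rw [hw, show γ - min (δ/2) (γ/2) - γ = -(min (δ/2) (γ/2)) by ring,
                abs_neg, abs_of_pos hmpos]
              have : min (δ/2) (γ/2) ≤ δ/2 := min_le_left _ _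
              linarith
          have hwlt : w < γ := by rw [hw]; linarith
          have := (J_parity_mono hT hwmem hγJ hwlt).1 he
          exact lt_irrefl _ (lt_of_lt_of_le this (hmin' w hwmem))
        · set w := γ + min (δ/2) ((T c - γ)/2) with hw
          have hmpos : (0:ℝ) < min (δ/2) ((T c - γ)/2) := lt_min (by linarith) (by linarith)
          have hwmem : w ∈ Jset T c s n := by
            apply hpert
            · constructor
              · rw [hw]; linarith [hγJ.1.1]
              · rw [hw]
                have : min (δ/2) ((T c - γ)/2) ≤ (T c - γ)/2 := min_le_right _ _
                linarith
            · rw [hw, show γ + min (δ/2) ((T c - γ)/2) - γ = min (δ/2) ((T c - γ)/2) by ring,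
                abs_of_pos hmpos]
              have : min (δ/2) ((T c - γ)/2) ≤ δ/2 := min_le_left _ _
              linarith
          have hwgt : γ < w := by rw [hw]; linarith
          have := (J_parity_mono hT hγJ hwmem hwgt).2 ho
          exact lt_irrefl _ (lt_of_lt_of_le this (hmin' w hwmem))

end Witness



















end S7

/-- For every admissible left-infinite sequence `s ∈ {0,1}^{-ℕ}`:
`sup π₀(A(s)) = inf {Tⁿ(c) : n ≥ 1, s_{-(n-1)}…s_{-1} = c₁…c_{n-1}, #_1(c₁…c_{n-1}) even}`
and
`inf π₀(A(s)) = sup {Tⁿ(c) : n ≥ 1, s_{-(n-1)}…s_{-1} = c₁…c_{n-1}, #_1(c₁…c_{n-1}) odd}`. -/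
theorem stmt7 (T : ℝ → ℝ) (c : ℝ) (hT : IsUnimodal T c) (s : ℕ → Bool)
    (hadm : AdmissibleLeft T c s) :
    sSup (proj0 '' basicArc T c s) =
      sInf {y : ℝ | ∃ n : ℕ, 1 ≤ n ∧ PrefixMatch T c s n ∧
        Even (kneadOnes T c (n - 1)) ∧ y = T^[n] c} ∧
    sInf (proj0 '' basicArc T c s) =
      sSup {y : ℝ | ∃ n : ℕ, 1 ≤ n ∧ PrefixMatch T c s n ∧
        Odd (kneadOnes T c (n - 1)) ∧ y = T^[n] c} := by
  classical
  have le_of_eps : ∀ {a b : ℝ}, (∀ ε > 0, a ≤ b + ε) → a ≤ b := by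
    intro a b h
    by_contra hc
    push_neg at hc
    have := h ((a - b)/2) (by linarith)
    linarith
  have hproj := S7.proj_eq_PP (s := s) hT
  obtain ⟨hMmem, hMle, hMeps⟩ := S7.sSup_PP_spec hT hadm
  obtain ⟨hmmem, hmge, hmeps⟩ := S7.sInf_PP_spec hT hadm
  rw [hproj]
  set E : Set ℝ := {y : ℝ | ∃ n : ℕ, 1 ≤ n ∧ PrefixMatch T c s n ∧
    Even (kneadOnes T c (n - 1)) ∧ y = T^[n] c} with hEdef
  set O : Set ℝ := {y : ℝ | ∃ n : ℕ, 1 ≤ n ∧ PrefixMatch T c s n ∧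
    Odd (kneadOnes T c (n - 1)) ∧ y = T^[n] c} with hOdef
  have hE_bdd : BddBelow E := by
    refine ⟨0, ?_⟩
    rintro y ⟨mm, _, _, _, rfl⟩
    exact (S7.iter_mem01 hT (S7.c_mem01 hT) mm).1
  have hO_bdd : BddAbove O := by
    refine ⟨1, ?_⟩
    rintro y ⟨mm, _, _, _, rfl⟩
    exact (S7.iter_mem01 hT (S7.c_mem01 hT) mm).2
  have hpm1 : PrefixMatch T c s 1 := fun i hi => absurd hi (by omega)
  have hknead0 : Even (kneadOnes T c (1 - 1)) := by
    have : kneadOnes T c 0 = 0 := by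
      unfold kneadOnes
      simp
    rw [show (1:ℕ) - 1 = 0 by omega, this]
    exact Even.zero
  have hE_ne : E.Nonempty := ⟨T^[1] c, 1, le_rfl, hpm1, hknead0, rfl⟩
  constructor
  · apply le_antisymm
    · apply le_csInf hE_ne
      rintro y ⟨mm, h1, hpm, hev, rfl⟩
      exact (S7.PP_le_match hT hMmem h1 hpm).1 hev
    · apply le_of_eps
      intro ε hε
      obtain ⟨n, hn⟩ := hMeps ε hε
      obtain ⟨mm, h1, hpm, hev, hval⟩ := S7.exists_even_witness hT hadm n
      have hle : sInf E ≤ T^[mm] c := csInf_le hE_bdd ⟨mm, h1, hpm, hev, rfl⟩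
      rw [hval] at hle
      linarith
  · apply le_antisymm
    · apply le_of_eps
      intro ε hε
      obtain ⟨n, hn⟩ := hmeps ε hε
      rcases S7.exists_odd_witness hT hadm n with ⟨mm, h1, hpm, hodd, hval⟩ | hz
      · have h2 : T^[mm] c ≤ sSup O := le_csSup hO_bdd ⟨mm, h1, hpm, hodd, rfl⟩
        rw [hval] at h2
        linarith
      · rw [hz] at hn
        have hO0 : 0 ≤ sSup O := by
          rcases Set.eq_empty_or_nonempty O with he | hne
          · rw [he, Real.sSup_empty]
          · obtain ⟨y, hy⟩ := hne
            obtain ⟨mm, _, _, _, rfl⟩ := hy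
            have h3 := le_csSup hO_bdd (by exact ⟨mm, ‹_›, ‹_›, ‹_›, rfl⟩ : T^[mm] c ∈ O)
            have h4 := (S7.iter_mem01 hT (S7.c_mem01 hT) mm).1
            linarith
        linarith
    · rcases Set.eq_empty_or_nonempty O with he | hne
      · rw [he, Real.sSup_empty]
        have h1 := S7.PP_sub 0 hmmem
        exact (S7.Pset_sub01 hT 0 h1).1
      · apply csSup_le hne
        rintro y ⟨mm, h1, hpm, hodd, rfl⟩
        exact (S7.PP_le_match hT hmmem h1 hpm).2 hodd
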